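/- arXiv:1906.01097 — 4 statements merged into one kernel-verified Lean document; each statement's English description precedes it below -/
import Mathlib

section
/- For every real X ≥ 1, log(X) + γ − 2/(3X) ≤ ∑_{n ≤ X} 1/n ≤ log(X) + γ + 1/(2X), where γ is the Euler–Mascheroni constant. -/
open Real Filter Topology

/-- `sinh t ≤ t * cosh t` for `t ≥ 0`. -/
lemma sinh_le_mul_cosh {t : ℝ} (ht : 0 ≤ t) : Real.sinh t ≤ t * Real.cosh t := by
  have hmono : MonotoneOn (fun s : ℝ => s * Real.cosh s - Real.sinh s) (Set.Ici 0) := by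
    apply monotoneOn_of_deriv_nonneg (convex_Ici 0)
    · exact (Continuous.continuousOn (by continuity))
    · intro x hx
      apply DifferentiableAt.differentiableWithinAt
      fun_prop
    · intro x hx
      rw [interior_Ici, Set.mem_Ioi] at hx
      have hd : deriv (fun s : ℝ => s * Real.cosh s - Real.sinh s) x
          = x * Real.sinh x := by
        rw [deriv_fun_sub (by fun_prop) (by fun_prop), deriv_fun_mul (by fun_prop) (by fun_prop)]
        simp [Real.deriv_cosh]
      rw [hd]
      exact mul_nonneg hx.le (Real.sinh_nonneg_iff.2 hx.le)
  have := hmono (Set.self_mem_Ici) (Set.mem_Ici.2 ht) ht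
  simpa using this

/-- trapezoid-type upper bound -/
lemma log_le_half_sub_inv {u : ℝ} (hu : 1 ≤ u) : Real.log u ≤ (u - u⁻¹) / 2 := by
  have h := Real.self_le_sinh_iff.2 (Real.log_nonneg hu)
  rwa [Real.sinh_log (by linarith)] at h

/-- midpoint-type lower bound -/
lemma half_harm_le_log {u : ℝ} (hu : 1 ≤ u) : 2 * (u - 1) / (u + 1) ≤ Real.log u := by
  have hu0 : (0:ℝ) < u := by linarith
  have hs : (0:ℝ) < Real.sqrt u := Real.sqrt_pos.2 hu0
  have hs1 : 1 ≤ Real.sqrt u := by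
    rw [show (1:ℝ) = Real.sqrt 1 from (Real.sqrt_one).symm]
    exact Real.sqrt_le_sqrt hu
  have key := sinh_le_mul_cosh (t := Real.log (Real.sqrt u)) (Real.log_nonneg hs1)
  rw [Real.sinh_log hs, Real.cosh_log hs, Real.log_sqrt hu0.le] at key
  have hsq : Real.sqrt u * Real.sqrt u = u := Real.mul_self_sqrt hu0.le
  have hne : Real.sqrt u ≠ 0 := hs.ne'
  rw [div_le_iff₀ (by linarith : (0:ℝ) < u + 1)]
  have hlog : 0 ≤ Real.log u := Real.log_nonneg hu
  have hinv : Real.sqrt u * (Real.sqrt u)⁻¹ = 1 := mul_inv_cancel₀ hne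
  nlinarith [mul_le_mul_of_nonneg_left key hs.le, hsq, hinv, hs]

lemma log_succ_sub_le {a : ℝ} (ha : 0 < a) :
    Real.log (a + 1) - Real.log a ≤ (1 / a + 1 / (a + 1)) / 2 := by
  have h1 : (1:ℝ) ≤ (a + 1) / a := by
    rw [le_div_iff₀ ha]; linarith
  have h := log_le_half_sub_inv h1
  rw [Real.log_div (by linarith) ha.ne'] at h
  have ha1 : (0:ℝ) < a + 1 := by linarith
  calc Real.log (a+1) - Real.log a ≤ ((a+1)/a - ((a+1)/a)⁻¹) / 2 := h
    _ = (1 / a + 1 / (a + 1)) / 2 := by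
        rw [inv_div]; field_simp; ring

lemma le_log_succ_sub {a : ℝ} (ha : 0 < a) :
    2 / (2 * a + 1) ≤ Real.log (a + 1) - Real.log a := by
  have h1 : (1:ℝ) ≤ (a + 1) / a := by
    rw [le_div_iff₀ ha]; linarith
  have h := half_harm_le_log h1
  rw [Real.log_div (by linarith) ha.ne'] at h
  refine le_trans (le_of_eq ?_) h
  have ha1 : (0:ℝ) < a + 1 := by linarith
  field_simp
  ring

theorem harmonic_le (n : ℕ) (hn : 1 ≤ n) :
    (harmonic n : ℝ) ≤ Real.log n + Real.eulerMascheroniConstant + 1 / (2 * n) := by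
  set F : ℕ → ℝ := fun m => (harmonic m : ℝ) - Real.log m - 1 / (2 * m) with hF
  have hstep : ∀ m : ℕ, 1 ≤ m → F m ≤ F (m + 1) := by
    intro m hm
    have hm0 : (0:ℝ) < m := by exact_mod_cast hm
    have htrap := log_succ_sub_le hm0
    simp only [hF, harmonic_succ]
    push_cast
    have : Real.log (m + 1) - Real.log m ≤ (1 / m + 1 / (m+1)) / 2 := htrap
    have h1 : (0:ℝ) < (m:ℝ) + 1 := by linarith
    have e1 : (1:ℝ)/(2*m) - 1/(2*((m:ℝ)+1)) = (1/m - 1/(m+1))/2 := by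
      field_simp
    have hinv : ((m:ℝ)+1)⁻¹ = 1/((m:ℝ)+1) := (one_div _).symm
    linarith [this, e1, hinv]
  have hmono : ∀ m : ℕ, n ≤ m → F n ≤ F m := by
    intro m hm
    induction m, hm using Nat.le_induction with
    | base => exact le_rfl
    | succ m hm ih => exact ih.trans (hstep m (hn.trans hm))
  have hlim : Tendsto F atTop (𝓝 Real.eulerMascheroniConstant) := by
    have h1 := Real.tendsto_harmonic_sub_log
    have h2 : Tendsto (fun m : ℕ => 1 / (2 * (m:ℝ))) atTop (𝓝 0) := by
      have : Tendsto (fun n : ℕ => 1 / (n : ℝ)) atTop (𝓝 0) := tendsto_one_div_atTop_nhds_zero_nat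
      have h3 := this.const_mul (1/2 : ℝ)
      simp only [mul_zero] at h3
      convert h3 using 2 with m
      ring
    have := h1.sub h2
    simpa [hF, sub_sub] using this.congr (fun m => by simp [hF]; ring)
  have hle : F n ≤ Real.eulerMascheroniConstant := by
    apply ge_of_tendsto hlim
    filter_upwards [eventually_ge_atTop n] with m hm
    exact hmono m hm
  have hn0 : (0:ℝ) < n := by exact_mod_cast hn
  simp only [hF] at hle
  linarith

theorem le_harmonic (n : ℕ) :
    Real.log (n + 1) + Real.eulerMascheroniConstant - 1 / (2 * n + 1) ≤ (harmonic n : ℝ) := by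
  set G : ℕ → ℝ := fun m => (harmonic m : ℝ) - Real.log (m + 1) + 1 / (2 * m + 1) with hG
  have hstep : ∀ m : ℕ, G (m + 1) ≤ G m := by
    intro m
    have hm1 : (0:ℝ) < (m:ℝ) + 1 := by positivity
    have hmid := le_log_succ_sub hm1
    simp only [hG, harmonic_succ]
    push_cast
    have h2 : (0:ℝ) < 2*(m:ℝ)+1 := by linarith
    have h3 : (0:ℝ) < 2*(m:ℝ)+3 := by linarith
    have e1 : (2:ℝ) / (2 * ((m:ℝ)+1) + 1) = 2/(2*(m:ℝ)+3) := by ring_nf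
    rw [e1] at hmid
    have key : (1:ℝ)/((m:ℝ)+1) - 1/(2*(m:ℝ)+1) - 1/(2*(m:ℝ)+3) ≤ 0 := by
      rw [div_sub_div _ _ hm1.ne' h2.ne', div_sub_div _ _ (by positivity) h3.ne']
      apply div_nonpos_of_nonpos_of_nonneg
      · ring_nf; nlinarith
      · positivity
    have hinv : ((m:ℝ)+1)⁻¹ = 1/((m:ℝ)+1) := (one_div _).symm
    have e2 : (1:ℝ)/(2*((m:ℝ)+1)+1) = 1/(2*(m:ℝ)+3) := by ring_nf
    have e3 : (2:ℝ)/(2*(m:ℝ)+3) = 2*(1/(2*(m:ℝ)+3)) := by ring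
    linarith [hmid, key, hinv, e2, e3]
  have hanti : ∀ m : ℕ, n ≤ m → G m ≤ G n := by
    intro m hm
    induction m, hm using Nat.le_induction with
    | base => exact le_rfl
    | succ m hm ih => exact (hstep m).trans ih
  have hlim : Tendsto G atTop (𝓝 Real.eulerMascheroniConstant) := by
    have h1 := Real.tendsto_harmonic_sub_log_add_one
    have h2 : Tendsto (fun m : ℕ => 1 / (2 * (m:ℝ) + 1)) atTop (𝓝 0) := by
      simp only [one_div]
      exact Tendsto.comp tendsto_inv_atTop_zero
        (Filter.tendsto_atTop_add_const_right _ 1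
          ((tendsto_natCast_atTop_atTop).const_mul_atTop (by norm_num)))
    have h3 := h1.add h2
    rw [add_zero] at h3
    exact h3.congr (fun m => rfl)
  have hge : Real.eulerMascheroniConstant ≤ G n := by
    apply le_of_tendsto hlim
    filter_upwards [eventually_ge_atTop n] with m hm
    exact hanti m hm
  simp only [hG] at hge
  linarith

open Real in
theorem harmonic_sum_bounds (X : ℝ) (hX : 1 ≤ X) :
    Real.log X + Real.eulerMascheroniConstant - 2 / (3 * X) ≤
      ∑ n ∈ Finset.Icc 1 ⌊X⌋₊, (1 : ℝ) / n ∧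
    ∑ n ∈ Finset.Icc 1 ⌊X⌋₊, (1 : ℝ) / n ≤
      Real.log X + Real.eulerMascheroniConstant + 1 / (2 * X) := by
  set n := ⌊X⌋₊ with hn
  have hn1 : 1 ≤ n := (Nat.one_le_floor_iff X).2 hX
  have hX0 : (0:ℝ) < X := by linarith
  have hnX : (n:ℝ) ≤ X := Nat.floor_le hX0.le
  have hXn : X < (n:ℝ) + 1 := Nat.lt_floor_add_one X
  have hn0 : (0:ℝ) < (n:ℝ) := by exact_mod_cast hn1
  have hsum : ∑ k ∈ Finset.Icc 1 n, (1 : ℝ) / k = (harmonic n : ℝ) := by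
    rw [harmonic_eq_sum_Icc]
    push_cast
    simp [one_div]
  rw [hsum]
  constructor
  · -- lower bound
    have hB := le_harmonic n
    have h1 : Real.log X ≤ Real.log ((n:ℝ) + 1) := Real.log_le_log hX0 hXn.le
    have h2 : 1 / (2 * (n:ℝ) + 1) ≤ 2 / (3 * ((n:ℝ) + 1)) := by
      rw [div_le_div_iff₀ (by linarith) (by linarith)]
      have hn1' : (1:ℝ) ≤ (n:ℝ) := by exact_mod_cast hn1
      nlinarith
    have h3 : 2 / (3 * ((n:ℝ) + 1)) ≤ 2 / (3 * X) := by
      apply div_le_div_of_nonneg_left (by norm_num) (by linarith) (by linarith)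
    linarith
  · -- upper bound
    have hA := harmonic_le n hn1
    -- log X - log n ≥ (X - n)/X
    have hlog : 1 - (n:ℝ)/X ≤ Real.log X - Real.log n := by
      have h := Real.log_le_sub_one_of_pos (x := (n:ℝ)/X) (by positivity)
      rw [Real.log_div hn0.ne' hX0.ne'] at h
      linarith
    have hn1' : (1:ℝ) ≤ (n:ℝ) := by exact_mod_cast hn1
    have hfrac : 1/(2*(n:ℝ)) - 1/(2*X) ≤ 1 - (n:ℝ)/X := by
      have e : 1/(2*(n:ℝ)) - 1/(2*X) = (X - n)/(2*n*X) := by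
        field_simp
      have e2 : (1:ℝ) - (n:ℝ)/X = (X - n)/X := by field_simp
      rw [e, e2]
      apply div_le_div_of_nonneg_left (by linarith) hX0
      nlinarith
    linarith
end

section
/- For every s ∈ ℂ with |arg(s)| ≤ π − θ where 0 < θ < π, one has Γ(s) = √(2π)·s^{s−1/2}·e^{−s}·e^{μ(s)} with |μ(s)| ≤ F_θ/|s|, where F_θ = 1/(12 sin²(θ/2)). -/
open Real in
lemma g_real_le (b : ℝ) (hb : 0 < b) :
    (b + 1/2) * Real.log (1 + b⁻¹) - 1 ≤ 1 / (12 * b * (b + 1)) := by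
  set x : ℝ := 1 / (2 * b + 1) with hxdef
  have hb1 : (0:ℝ) < 2 * b + 1 := by linarith
  have hx0 : 0 < x := by positivity
  have hx1 : x < 1 := by rw [hxdef, div_lt_one hb1]; linarith
  have hA : HasSum (fun k : ℕ => (b + 1/2) * ((2 : ℝ) * (1 / (2 * k + 1)) * x ^ (2 * k + 1)))
      ((b + 1/2) * Real.log (1 + b⁻¹)) := (hasSum_log_one_add_inv hb).mul_left _
  have hterm : ∀ k : ℕ, (b + 1/2) * ((2 : ℝ) * (1 / (2 * k + 1)) * x ^ (2 * k + 1))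
      = (1 / (2 * k + 1)) * (x^2) ^ k := by
    intro k
    have h2k : (2:ℝ) * k + 1 ≠ 0 := by positivity
    have : x ^ (2 * k + 1) = (x^2)^k * x := by rw [← pow_mul, pow_succ]
    rw [this, hxdef]
    field_simp
  rw [funext hterm] at hA
  -- subtract the k = 0 term (which equals 1)
  have hA' : HasSum (fun k : ℕ => (1 / (2 * (k+1) + 1)) * (x^2) ^ (k+1))
      ((b + 1/2) * Real.log (1 + b⁻¹) - 1) := by
    have := (hasSum_nat_add_iff' 1).mpr hA
    simpa using this
  have hxx : x^2 < 1 := by nlinarith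
  have hB : HasSum (fun k : ℕ => (1/3 : ℝ) * (x^2) ^ (k+1))
      (1/3 * (x^2 * (1 - x^2)⁻¹)) := by
    have hg : HasSum (fun k : ℕ => (x^2) ^ (k+1)) (x^2 * (1-x^2)⁻¹) := by
      have := (hasSum_geometric_of_lt_one (by positivity) hxx).mul_left (x^2)
      convert this using 2 with k
      · rfl
      rw [pow_succ]; ring
    exact hg.mul_left _
  have hle := hasSum_le (fun k => by
    have h1 : (0:ℝ) < 2 * (k+1:ℕ) + 1 := by positivity
    have h3 : (1:ℝ) / (2 * ((k:ℝ)+1) + 1) ≤ 1/3 := by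
      apply one_div_le_one_div_of_le (by norm_num)
      linarith [Nat.cast_nonneg (α := ℝ) k]
    exact mul_le_mul_of_nonneg_right h3 (by positivity)) hA' hB
  calc (b + 1/2) * Real.log (1 + b⁻¹) - 1 ≤ 1/3 * (x^2 * (1 - x^2)⁻¹) := hle
    _ = 1 / (12 * b * (b + 1)) := by
        rw [hxdef]
        have h1 : (2*b+1)^2 - 1 ≠ 0 := by nlinarith
        field_simp
        ring


lemma sector_lower (θ : ℝ) (hθ0 : 0 < θ) (hθπ : θ < Real.pi) (s : ℂ)
    (hs : |s.arg| ≤ Real.pi - θ) (r : ℝ) (hr : 0 ≤ r) :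
    (‖s‖ + r) * Real.sin (θ/2) ≤ ‖s + r‖ := by
  have hsin0 : 0 < Real.sin (θ/2) := Real.sin_pos_of_pos_of_lt_pi (by linarith) (by linarith [Real.pi_pos])
  have hsin1 : Real.sin (θ/2) ≤ 1 := Real.sin_le_one _
  rcases eq_or_ne s 0 with rfl | hs0
  · simp only [norm_zero, zero_add, Complex.norm_real, Real.norm_eq_abs, abs_of_nonneg hr]
    nlinarith
  · apply le_of_pow_le_pow_left₀ two_ne_zero (norm_nonneg _)
    have hre : s.re = ‖s‖ * Real.cos s.arg := by
      have hane : ‖s‖ ≠ 0 := norm_ne_zero_iff.mpr hs0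
      rw [Complex.cos_arg hs0, mul_comm, div_mul_cancel₀ _ hane]
    have hcos : Real.cos (Real.pi - θ) ≤ Real.cos s.arg := by
      rw [← Real.cos_abs s.arg]
      apply Real.cos_le_cos_of_nonneg_of_le_pi (abs_nonneg _) (by linarith)
      exact hs
    rw [Real.cos_pi_sub] at hcos
    have hsq : Real.sin (θ/2) ^ 2 = (1 - Real.cos θ) / 2 := by
      rw [← sq_abs, Real.abs_sin_half, Real.sq_sqrt]
      linarith [Real.cos_le_one θ]
    have habs2 : ‖s + r‖ ^ 2 = (s.re + r)^2 + s.im^2 := by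
      rw [Complex.sq_norm, Complex.normSq_apply]
      simp only [Complex.add_re, Complex.add_im, Complex.ofReal_re, Complex.ofReal_im, add_zero]
      ring
    have hnorm : s.re^2 + s.im^2 = ‖s‖ ^ 2 := by
      rw [Complex.sq_norm, Complex.normSq_apply]
      ring
    have hcos1 : -1 ≤ Real.cos θ := Real.neg_one_le_cos θ
    have ha0 : 0 ≤ ‖s‖ := norm_nonneg s
    rw [habs2, mul_pow, hsq]
    nlinarith [sq_nonneg (‖s‖ - r), sq_nonneg (‖s‖ + r), mul_nonneg ha0 hr]


open intervalIntegral in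
lemma g_cplx_integral (w : ℂ) (hw : ∀ t : ℝ, 0 ≤ t → w + t ∈ Complex.slitPlane) :
    (w + 1/2) * (Complex.log (w + 1) - Complex.log w) - 1
      = ∫ t in (0:ℝ)..1, ((t * (1 - t) / 2 : ℝ) : ℂ) / (w + t) ^ 2 := by
  have hne : ∀ t : ℝ, 0 ≤ t → w + t ≠ 0 := fun t ht => Complex.slitPlane_ne_zero (hw t ht)
  set F : ℝ → ℂ := fun t => (-(t:ℂ) + (1 + 2*w) * Complex.log (w + t)
      + (w + w^2) * (w + (t:ℂ))⁻¹)/2 with hF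
  have hderiv : ∀ t ∈ Set.uIcc (0:ℝ) 1,
      HasDerivAt F (((t * (1 - t) / 2 : ℝ) : ℂ) / (w + t) ^ 2) t := by
    intro t ht
    rw [Set.uIcc_of_le (by norm_num : (0:ℝ) ≤ 1)] at ht
    have ht0 : 0 ≤ t := ht.1
    have hmem := hw t ht0
    have hne' := hne t ht0
    have h0 : HasDerivAt (fun u : ℝ => w + (u:ℂ)) 1 t := by
      simpa using (Complex.ofRealCLM.hasDerivAt (x := t)).const_add w
    have hlog : HasDerivAt (fun u : ℝ => Complex.log (w + u)) ((w + t)⁻¹) t := by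
      simpa [Function.comp_def] using (Complex.hasDerivAt_log hmem).comp t h0
    have hinv : HasDerivAt (fun u : ℝ => (w + (u:ℂ))⁻¹) (-(1/(w + t)^2)) t := by
      simpa [one_div, Function.comp_def] using (hasDerivAt_inv hne').comp t h0
    have hid : HasDerivAt (fun u : ℝ => -((u:ℂ))) (-1) t := by
      simpa [Pi.neg_def] using (Complex.ofRealCLM.hasDerivAt (x := t)).neg
    have hsum : HasDerivAt (fun u : ℝ => -((u:ℂ)) + (1 + 2*w) * Complex.log (w + u)
        + (w + w^2) * (w + (u:ℂ))⁻¹)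
        (-1 + (1 + 2*w) * (w + t)⁻¹ + (w + w^2) * (-(1/(w + t)^2))) t :=
      (hid.add (hlog.const_mul _)).add (hinv.const_mul _)
    have heq : ((t * (1 - t) / 2 : ℝ) : ℂ) / (w + t) ^ 2
        = (-1 + (1 + 2*w) * (w + t)⁻¹ + (w + w^2) * (-(1/(w + t)^2)))/2 := by
      push_cast
      field_simp
      ring
    rw [hF, heq]
    exact hsum.div_const 2
  have hint : IntervalIntegrable (fun t : ℝ => ((t * (1 - t) / 2 : ℝ) : ℂ) / (w + t) ^ 2)
      MeasureTheory.volume 0 1 := by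
    apply ContinuousOn.intervalIntegrable
    apply ContinuousOn.div
    · exact Continuous.continuousOn (by continuity)
    · exact Continuous.continuousOn (by continuity)
    · intro t ht
      rw [Set.uIcc_of_le (by norm_num : (0:ℝ) ≤ 1)] at ht
      exact pow_ne_zero 2 (hne t ht.1)
  rw [integral_eq_sub_of_hasDerivAt hderiv hint, hF]
  have hw0 : w ≠ 0 := by simpa using hne 0 le_rfl
  have hw1 : w + 1 ≠ 0 := by simpa using hne 1 zero_le_one
  push_cast
  simp only [add_zero]
  field_simp
  ring


open intervalIntegral in
lemma g_real_integral (b : ℝ) (hb : 0 < b) :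
    (∫ t in (0:ℝ)..1, t * (1 - t) / 2 / (b + t) ^ 2)
      = (b + 1/2) * Real.log (1 + b⁻¹) - 1 := by
  have hne : ∀ t : ℝ, 0 ≤ t → b + t ≠ 0 := fun t ht => by positivity
  set F : ℝ → ℝ := fun t => (-t + (1 + 2*b) * Real.log (b + t) + (b + b^2) * (b + t)⁻¹)/2
    with hF
  have hderiv : ∀ t ∈ Set.uIcc (0:ℝ) 1,
      HasDerivAt F (t * (1 - t) / 2 / (b + t) ^ 2) t := by
    intro t ht
    rw [Set.uIcc_of_le (by norm_num : (0:ℝ) ≤ 1)] at ht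
    have ht0 : 0 ≤ t := ht.1
    have hne' := hne t ht0
    have h0 : HasDerivAt (fun u : ℝ => b + u) 1 t := by
      simpa using (hasDerivAt_id t).const_add b
    have hlog : HasDerivAt (fun u : ℝ => Real.log (b + u)) ((b + t)⁻¹) t := by
      simpa [Function.comp_def] using (Real.hasDerivAt_log hne').comp t h0
    have hinv : HasDerivAt (fun u : ℝ => (b + u)⁻¹) (-(1/(b + t)^2)) t := by
      simpa [one_div, Function.comp_def] using (hasDerivAt_inv hne').comp t h0
    have hid : HasDerivAt (fun u : ℝ => -u) (-1) t := (hasDerivAt_id t).neg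
    have hsum : HasDerivAt (fun u : ℝ => -u + (1 + 2*b) * Real.log (b + u)
        + (b + b^2) * (b + u)⁻¹)
        (-1 + (1 + 2*b) * (b + t)⁻¹ + (b + b^2) * (-(1/(b + t)^2))) t :=
      (hid.add (hlog.const_mul _)).add (hinv.const_mul _)
    have heq : t * (1 - t) / 2 / (b + t) ^ 2
        = (-1 + (1 + 2*b) * (b + t)⁻¹ + (b + b^2) * (-(1/(b + t)^2)))/2 := by
      field_simp
      ring
    rw [hF, heq]
    exact hsum.div_const 2
  have hint : IntervalIntegrable (fun t : ℝ => t * (1 - t) / 2 / (b + t) ^ 2)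
      MeasureTheory.volume 0 1 := by
    apply ContinuousOn.intervalIntegrable
    apply ContinuousOn.div
    · exact Continuous.continuousOn (by continuity)
    · exact Continuous.continuousOn (by continuity)
    · intro t ht
      rw [Set.uIcc_of_le (by norm_num : (0:ℝ) ≤ 1)] at ht
      exact pow_ne_zero 2 (hne t ht.1)
  rw [integral_eq_sub_of_hasDerivAt hderiv hint, hF]
  have hb1 : b + 1 ≠ 0 := by positivity
  have hlog1 : Real.log (1 + b⁻¹) = Real.log (b + 1) - Real.log b := by
    rw [show (1 + b⁻¹) = (b+1)/b by field_simp, Real.log_div hb1 hb.ne']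
  rw [hlog1]
  simp only [add_zero]
  field_simp
  ring


-- assume previous lemmas as axioms for fast iteration

lemma slit_of_sector (θ : ℝ) (hθ0 : 0 < θ) (hθπ : θ < Real.pi) (s : ℂ)
    (hs : |s.arg| ≤ Real.pi - θ) (hs0 : s ≠ 0) (r : ℝ) (hr : 0 ≤ r) :
    s + r ∈ Complex.slitPlane := by
  rcases eq_or_ne s.im 0 with him | him
  · left
    have harg : s.arg ≠ Real.pi := by
      intro h
      rw [h] at hs
      rw [abs_of_pos Real.pi_pos] at hs
      linarith
    have hre : 0 < s.re := by
      rcases lt_trichotomy s.re 0 with h | h | h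
      · exact absurd (Complex.arg_eq_pi_iff.mpr ⟨h, him⟩) harg
      · exact absurd (Complex.ext h him) hs0
      · exact h
    simp only [Complex.add_re, Complex.ofReal_re]
    linarith
  · right
    simpa using him

lemma g_bound (θ : ℝ) (hθ0 : 0 < θ) (hθπ : θ < Real.pi) (s : ℂ)
    (hs : |s.arg| ≤ Real.pi - θ) (hs0 : s ≠ 0) (n : ℕ) :
    ‖(s + n + 1/2) * (Complex.log (s + n + 1) - Complex.log (s + n)) - 1‖
      ≤ 1 / (12 * Real.sin (θ/2) ^ 2)
          * (1/(‖s‖ + n) - 1/(‖s‖ + n + 1)) := by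
  set a : ℝ := ‖s‖ with ha
  have ha0 : 0 < a := norm_pos_iff.mpr hs0
  have hsin0 : 0 < Real.sin (θ/2) :=
    Real.sin_pos_of_pos_of_lt_pi (by linarith) (by linarith [Real.pi_pos])
  set b : ℝ := a + n with hb
  have hb0 : 0 < b := by positivity
  have hw : ∀ t : ℝ, 0 ≤ t → (s + n) + t ∈ Complex.slitPlane := by
    intro t ht
    have := slit_of_sector θ hθ0 hθπ s hs hs0 ((n:ℝ) + t) (by positivity)
    have heq : (s + ↑n) + (t:ℂ) = s + ((((n:ℝ) + t) : ℝ) : ℂ) := by push_cast; ring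
    rw [heq]
    exact this
  have hrep := g_cplx_integral (s + n) hw
  have key : ‖(s + n + 1/2) * (Complex.log (s + n + 1) - Complex.log (s + n)) - 1‖
      ≤ ∫ t in (0:ℝ)..1, (Real.sin (θ/2) ^ 2)⁻¹ * (t * (1 - t) / 2 / (b + t) ^ 2) := by
    rw [hrep]
    have hbd := intervalIntegral.norm_integral_le_of_norm_le
      (f := fun t : ℝ => ((t * (1 - t) / 2 : ℝ) : ℂ) / ((s + n) + t) ^ 2)
      (g := fun t : ℝ => (Real.sin (θ/2) ^ 2)⁻¹ * (t * (1 - t) / 2 / (b + t) ^ 2))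
      (μ := MeasureTheory.volume) (a := 0) (b := 1) (by norm_num) ?_ ?_
    · exact hbd
    · apply Filter.Eventually.of_forall
      intro t ht
      have ht0 : 0 < t := ht.1
      have ht1 : t ≤ 1 := ht.2
      have hH : 0 ≤ t * (1 - t) / 2 := by nlinarith
      have hlow : (b + t) * Real.sin (θ/2) ≤ ‖(s + n) + t‖ := by
        have := sector_lower θ hθ0 hθπ s hs ((n:ℝ) + t) (by positivity)
        rw [hb]
        convert this using 2
        · ring
        · push_cast; ring
      have hbt : 0 < b + t := by linarith
      have habs : 0 < ‖(s + n) + t‖ := lt_of_lt_of_le (by positivity) hlow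
      rw [norm_div, norm_pow]
      simp only [Complex.norm_real, Real.norm_eq_abs]
      rw [abs_of_nonneg hH]
      rw [div_le_iff₀ (by positivity)]
      have hsq : ((b + t) * Real.sin (θ/2))^2 ≤ ‖(s + n) + t‖ ^ 2 := by
        apply pow_le_pow_left₀ (by positivity) hlow
      calc t * (1 - t) / 2 = ((Real.sin (θ/2) ^ 2)⁻¹ * (t * (1 - t) / 2 / (b + t) ^ 2))
            * ((b + t) * Real.sin (θ/2))^2 := by
            field_simp
        _ ≤ _ := by
            apply mul_le_mul_of_nonneg_left hsq
            positivity
    · apply IntervalIntegrable.const_mul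
      apply ContinuousOn.intervalIntegrable
      apply ContinuousOn.div
      · exact Continuous.continuousOn (by continuity)
      · exact Continuous.continuousOn (by continuity)
      · intro t ht
        rw [Set.uIcc_of_le (by norm_num : (0:ℝ) ≤ 1)] at ht
        have : 0 < b + t := by linarith [ht.1]
        positivity
  rw [intervalIntegral.integral_const_mul, g_real_integral b hb0] at key
  refine key.trans ?_
  have hle := g_real_le b hb0
  have hfin : (Real.sin (θ/2) ^ 2)⁻¹ * (1 / (12 * b * (b + 1)))
      = 1 / (12 * Real.sin (θ/2) ^ 2) * (1/b - 1/(b+1)) := by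
    have : b + 1 ≠ 0 := by positivity
    field_simp
    ring
  calc (Real.sin (θ/2) ^ 2)⁻¹ * ((b + 1/2) * Real.log (1 + b⁻¹) - 1)
      ≤ (Real.sin (θ/2) ^ 2)⁻¹ * (1 / (12 * b * (b + 1))) := by
        apply mul_le_mul_of_nonneg_left hle
        positivity
    _ = _ := hfin


open Complex Finset in
lemma telescope_sum (s : ℂ) (N : ℕ) :
    ∑ n ∈ range N, ((s + n + 1/2) * (Complex.log (s + n + 1) - Complex.log (s + n)) - 1)
      = (s + N - 1/2) * Complex.log (s + N) - (s - 1/2) * Complex.log s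
        - ∑ n ∈ range N, Complex.log (s + n) - N := by
  induction N with
  | zero => simp
  | succ N ih =>
    rw [Finset.sum_range_succ, ih, Finset.sum_range_succ]
    push_cast
    ring

open Complex Finset in
lemma exp_telescope (s : ℂ) (hne : ∀ n : ℕ, s + n ≠ 0) (N : ℕ) :
    Complex.exp (∑ n ∈ range N, ((s + n + 1/2) * (Complex.log (s + n + 1) - Complex.log (s + n)) - 1))
      = Complex.exp ((s + N - 1/2) * Complex.log (s + N)) * Complex.exp (-((s - 1/2) * Complex.log s))
        * Complex.exp (-(N:ℂ)) / ∏ n ∈ range N, (s + n) := by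
  rw [telescope_sum]
  have hprod : Complex.exp (∑ n ∈ range N, Complex.log (s + n)) = ∏ n ∈ range N, (s + n) := by
    rw [Complex.exp_sum]
    exact Finset.prod_congr rfl fun n _ => Complex.exp_log (hne n)
  rw [show (s + N - 1/2) * Complex.log (s + N) - (s - 1/2) * Complex.log s
        - ∑ n ∈ range N, Complex.log (s + n) - N
      = ((s + N - 1/2) * Complex.log (s + N)) + (-((s - 1/2) * Complex.log s)) + (-(N:ℂ))
        - ∑ n ∈ range N, Complex.log (s + n) by ring]
  rw [Complex.exp_sub, Complex.exp_add, Complex.exp_add, hprod]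


open Filter Topology in
lemma inv_nat_tendsto_cplx : Tendsto (fun N : ℕ => ((N:ℂ))⁻¹) atTop (𝓝 0) := by
  have h := tendsto_inv_atTop_nhds_zero_nat (𝕜 := ℝ)
  have h2 := (Complex.continuous_ofReal.tendsto 0).comp h
  apply Tendsto.congr (f₁ := Complex.ofReal ∘ fun n : ℕ => ((n:ℝ))⁻¹) ?_ (by simpa using h2)
  intro n
  simp [Function.comp]

open Filter Topology in
lemma log_factor_tendsto (s : ℂ) (hs0 : s ≠ 0) :
    Tendsto (fun N : ℕ => (s + N + 1/2) * Complex.log (1 + s/N)) atTop (𝓝 s) := by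
  have hu : Tendsto (fun N : ℕ => s/N) atTop (𝓝 0) := by
    have := inv_nat_tendsto_cplx.const_mul s
    simpa [div_eq_mul_inv] using this
  have hu' : Tendsto (fun N : ℕ => s/N) atTop (𝓝[≠] 0) := by
    rw [tendsto_nhdsWithin_iff]
    refine ⟨hu, ?_⟩
    filter_upwards [eventually_ge_atTop 1] with N hN
    have hN0 : (N:ℂ) ≠ 0 := Nat.cast_ne_zero.mpr (by omega)
    exact div_ne_zero hs0 hN0
  have hslope : Tendsto (fun z : ℂ => Complex.log (1 + z) / z) (𝓝[≠] 0) (𝓝 1) := by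
    have h1 : (1:ℂ) ∈ Complex.slitPlane := by simp
    have hd := (Complex.hasDerivAt_log h1)
    rw [hasDerivAt_iff_tendsto_slope] at hd
    rw [show ((1:ℂ))⁻¹ = 1 by norm_num] at hd
    have hmap : Tendsto (fun z : ℂ => 1 + z) (𝓝[≠] 0) (𝓝[≠] 1) := by
      rw [tendsto_nhdsWithin_iff]
      constructor
      · have h2 : Tendsto (fun z : ℂ => 1 + z) (𝓝 0) (𝓝 (1 + 0)) :=
          tendsto_const_nhds.add tendsto_id
        rw [add_zero] at h2
        exact h2.mono_left nhdsWithin_le_nhds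
      · filter_upwards [self_mem_nhdsWithin] with z hz
        simpa using sub_ne_zero.mp (by simpa [add_sub_cancel_left] using hz)
    have := hd.comp hmap
    apply this.congr
    intro z
    simp [slope, Function.comp, div_eq_inv_mul]
  have hlogu : Tendsto (fun N : ℕ => Complex.log (1 + s/N) / (s/N)) atTop (𝓝 1) :=
    hslope.comp hu'
  have hcoef : Tendsto (fun N : ℕ => (s + N + 1/2) * (s/N)) atTop (𝓝 s) := by
    have h2 : Tendsto (fun N : ℕ => s + s*(s+1/2) * ((N:ℂ))⁻¹) atTop (𝓝 (s + s*(s+1/2)*0)) :=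
      tendsto_const_nhds.add (inv_nat_tendsto_cplx.const_mul _)
    rw [show s + s*(s+1/2)*0 = s by ring] at h2
    apply h2.congr'
    filter_upwards [eventually_ge_atTop 1] with N hN
    have hN0 : (N:ℂ) ≠ 0 := Nat.cast_ne_zero.mpr (by omega)
    field_simp
    ring
  have := hcoef.mul hlogu
  rw [mul_one] at this
  apply this.congr'
  filter_upwards [eventually_ge_atTop 1] with N hN
  have hN0 : (N:ℂ) ≠ 0 := Nat.cast_ne_zero.mpr (by omega)
  have hsN : s/N ≠ 0 := div_ne_zero hs0 hN0
  field_simp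


open Filter Topology Nat in
lemma rr_tendsto :
    Tendsto (fun N : ℕ => (N:ℝ)^N * Real.sqrt N * Real.exp (-(N:ℝ)) / (N ! : ℝ))
      atTop (𝓝 (1 / Real.sqrt (2 * Real.pi))) := by
  have hπ : 0 < Real.pi := Real.pi_pos
  have hsπ : (0:ℝ) < Real.sqrt Real.pi := Real.sqrt_pos.mpr hπ
  have h2 : (0:ℝ) < Real.sqrt 2 := by positivity
  have hst := Stirling.tendsto_stirlingSeq_sqrt_pi
  have hdiv : Tendsto (fun N : ℕ => 1 / (Real.sqrt 2 * Stirling.stirlingSeq N)) atTop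
      (𝓝 (1 / (Real.sqrt 2 * Real.sqrt Real.pi))) :=
    tendsto_const_nhds.div (tendsto_const_nhds.mul hst) (by positivity)
  have heq : 1 / (Real.sqrt 2 * Real.sqrt Real.pi) = 1 / Real.sqrt (2 * Real.pi) := by
    rw [← Real.sqrt_mul (by norm_num : (0:ℝ) ≤ 2)]
  rw [heq] at hdiv
  apply hdiv.congr'
  filter_upwards [eventually_ge_atTop 1] with N hN
  have hN0 : (0:ℝ) < (N:ℝ) := by exact_mod_cast Nat.pos_of_ne_zero (by omega)
  have hfac : (0:ℝ) < (N ! : ℝ) := by exact_mod_cast Nat.factorial_pos N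
  rw [Stirling.stirlingSeq]
  rw [Real.sqrt_mul (by norm_num : (0:ℝ) ≤ 2)]
  have hexp : (0:ℝ) < Real.exp 1 ^ N := by positivity
  have hsN : (0:ℝ) < Real.sqrt N := Real.sqrt_pos.mpr hN0
  have hexpneg : Real.exp (-(N:ℝ)) = (Real.exp 1 ^ N)⁻¹ := by
    rw [← Real.exp_nat_mul, ← Real.exp_neg]
    norm_num
  rw [hexpneg]
  rw [div_pow]
  field_simp



open Filter Topology Nat in
lemma q_tendsto (s : ℂ) (hs0 : s ≠ 0) (hne : ∀ n : ℕ, s + n ≠ 0) :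
    Tendsto (fun N : ℕ => Complex.exp ((s + N + 1/2) * Complex.log (s + N))
        * Complex.exp (-(N:ℂ)) / ((N:ℂ)^s * (N ! : ℂ)))
      atTop (𝓝 (Complex.exp s / (Real.sqrt (2 * Real.pi) : ℝ))) := by
  have hmain := (((Complex.continuous_ofReal.tendsto _).comp rr_tendsto).mul
    ((Complex.continuous_exp.tendsto s).comp (log_factor_tendsto s hs0)))
  have hval : ((1 / Real.sqrt (2 * Real.pi) : ℝ) : ℂ) * Complex.exp s
      = Complex.exp s / (Real.sqrt (2 * Real.pi) : ℝ) := by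
    push_cast
    ring
  rw [hval] at hmain
  apply hmain.congr'
  filter_upwards [eventually_ge_atTop 1] with N hN
  have hNpos : (0:ℝ) < (N:ℝ) := by exact_mod_cast Nat.pos_of_ne_zero (by omega)
  have hN0C : (N:ℂ) ≠ 0 := Nat.cast_ne_zero.mpr (by omega)
  have h1 : (1 + s/(N:ℂ)) ≠ 0 := by
    intro h
    apply hne N
    have : ((N:ℂ)) * (1 + s/N) = s + N := by field_simp; ring
    rw [← this, h, mul_zero]
  have hlogsplit : Complex.log (s + N) = (Real.log N : ℂ) + Complex.log (1 + s/N) := by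
    have hrw : s + (N:ℂ) = ((N:ℝ):ℂ) * (1 + s/N) := by
      push_cast
      field_simp
      ring
    rw [hrw, Complex.log_ofReal_mul hNpos h1]
  have hfac0 : ((N ! : ℕ) : ℂ) ≠ 0 := Nat.cast_ne_zero.mpr (Nat.factorial_pos N).ne'
  have hNs0 : ((N:ℂ))^s ≠ 0 := by
    rw [Complex.cpow_def_of_ne_zero hN0C]
    exact Complex.exp_ne_zero _
  have e1 : Complex.exp (s * (Real.log N : ℂ)) = (N:ℂ)^s := by
    rw [Complex.cpow_def_of_ne_zero hN0C, Complex.natCast_log, mul_comm]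
  have e2 : Complex.exp ((N:ℂ) * (Real.log N : ℂ)) = (((N:ℝ)^N : ℝ) : ℂ) := by
    rw [show (N:ℂ) * (Real.log N : ℂ) = (((N:ℝ) * Real.log N : ℝ) : ℂ) by push_cast; ring]
    rw [← Complex.ofReal_exp]
    congr 1
    rw [show (N:ℝ) * Real.log N = (N:ℕ) * Real.log N by norm_num]
    rw [Real.exp_nat_mul, Real.exp_log hNpos]
  have e3 : Complex.exp ((1/2 : ℂ) * (Real.log N : ℂ)) = ((Real.sqrt N : ℝ) : ℂ) := by
    rw [show (1/2 : ℂ) * (Real.log N : ℂ) = ((Real.log N * (1/2) : ℝ) : ℂ) by push_cast; ring]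
    rw [← Complex.ofReal_exp]
    congr 1
    rw [Real.sqrt_eq_rpow, Real.rpow_def_of_pos hNpos]
  have e4 : Complex.exp (-(N:ℂ)) = ((Real.exp (-(N:ℝ)) : ℝ) : ℂ) := by
    push_cast
    rfl
  have hsplit2 : Complex.exp ((s + N + 1/2) * Complex.log (s + N))
      = (N:ℂ)^s * (((N:ℝ)^N : ℝ) : ℂ) * ((Real.sqrt N : ℝ) : ℂ)
        * Complex.exp ((s + N + 1/2) * Complex.log (1 + s/N)) := by
    rw [hlogsplit, mul_add, Complex.exp_add]
    congr 1
    rw [show (s + N + 1/2) * (Real.log N : ℂ)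
        = s * (Real.log N : ℂ) + ((N:ℂ) * (Real.log N : ℂ) + (1/2 : ℂ) * (Real.log N : ℂ))
        by ring]
    rw [Complex.exp_add, Complex.exp_add, e1, e2, e3]
    ring
  rw [hsplit2, e4]
  simp only [Function.comp]
  rw [Complex.ofReal_div, Complex.ofReal_mul, Complex.ofReal_mul]
  have hfac0' : (((N ! : ℕ) : ℝ) : ℂ) ≠ 0 := by exact_mod_cast hfac0
  field_simp
  push_cast
  ring


open Filter Topology Finset

open Complex in
theorem stirling_explicit (θ : ℝ) (hθ0 : 0 < θ) (hθπ : θ < Real.pi)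
    (s : ℂ) (hs : |s.arg| ≤ Real.pi - θ) :
    ∃ μ : ℂ, ‖μ‖ ≤ 1 / (12 * Real.sin (θ / 2) ^ 2) / ‖s‖ ∧
      Complex.Gamma s =
        (Real.sqrt (2 * Real.pi) : ℂ) * s ^ (s - 1 / 2) * Complex.exp (-s)
          * Complex.exp μ := by
  rcases eq_or_ne s 0 with rfl | hs0
  · refine ⟨0, by simp, ?_⟩
    rw [Complex.Gamma_zero, Complex.zero_cpow (by norm_num : (0:ℂ) - 1/2 ≠ 0)]
    simp
  set a : ℝ := ‖s‖ with ha
  have ha0 : 0 < a := norm_pos_iff.mpr hs0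
  have hsin0 : 0 < Real.sin (θ/2) :=
    Real.sin_pos_of_pos_of_lt_pi (by linarith) (by linarith [Real.pi_pos])
  set C : ℝ := 1 / (12 * Real.sin (θ / 2) ^ 2) with hCdef
  have hC0 : 0 ≤ C := by positivity
  have hne : ∀ n : ℕ, s + (n:ℂ) ≠ 0 := by
    intro n
    have h1 := slit_of_sector θ hθ0 hθπ s hs hs0 n (Nat.cast_nonneg n)
    have h2 := Complex.slitPlane_ne_zero h1
    rwa [Complex.ofReal_natCast] at h2
  set g : ℕ → ℂ := fun n =>
    (s + n + 1/2) * (Complex.log (s + n + 1) - Complex.log (s + n)) - 1 with hg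
  have hgb : ∀ n : ℕ, ‖g n‖ ≤ C * (1/(a+n) - 1/(a+n+1)) := fun n =>
    g_bound θ hθ0 hθπ s hs hs0 n
  have htel0 : HasSum (fun n : ℕ => 1/(a+n) - 1/(a+n+1)) (1/a) := by
    have hnonneg : ∀ i : ℕ, 0 ≤ 1/(a+i) - 1/(a+i+1) := by
      intro i
      have h1 : (0:ℝ) < a + i := by positivity
      have h2 : a + i ≤ a + i + 1 := by linarith
      have := one_div_le_one_div_of_le h1 h2
      linarith
    rw [hasSum_iff_tendsto_nat_of_nonneg hnonneg]
    have hpart : ∀ n : ℕ, ∑ i ∈ range n, (1/(a+i) - 1/(a+i+1)) = 1/a - 1/(a+n) := by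
      intro n
      have h := Finset.sum_range_sub' (fun i : ℕ => 1/(a+i)) n
      simp only [Nat.cast_zero, add_zero] at h
      rw [← h]
      apply Finset.sum_congr rfl
      intro i _
      push_cast
      ring_nf
    have hlim : Tendsto (fun n : ℕ => 1/a - 1/(a+n)) atTop (𝓝 (1/a - 0)) := by
      apply tendsto_const_nhds.sub
      simp only [one_div]
      exact Tendsto.comp tendsto_inv_atTop_zero
        (tendsto_atTop_add_const_left _ a tendsto_natCast_atTop_atTop)
    rw [sub_zero] at hlim
    exact hlim.congr fun n => (hpart n).symm
  have hCsum : HasSum (fun n : ℕ => C * (1/(a+n) - 1/(a+n+1))) (C * (1/a)) :=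
    htel0.mul_left C
  have hnormsum : Summable (fun n => ‖g n‖) := by
    apply Summable.of_nonneg_of_le (fun n => norm_nonneg _) ?_ hCsum.summable
    intro n
    exact hgb n
  have hsummable : Summable g := Summable.of_norm hnormsum
  set μ : ℂ := ∑' n, g n with hμ
  have hbound : ‖μ‖ ≤ C / a := by
    calc ‖μ‖ ≤ ∑' n, ‖g n‖ := norm_tsum_le_tsum_norm hnormsum
      _ ≤ ∑' n : ℕ, C * (1/(a+n) - 1/(a+n+1)) := hnormsum.tsum_le_tsum hgb hCsum.summable
      _ = C * (1/a) := hCsum.tsum_eq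
      _ = C / a := by rw [mul_one_div]
  refine ⟨μ, hbound, ?_⟩
  set X : ℂ := Complex.exp (-((s - 1/2) * Complex.log s)) with hX
  clear_value X
  have hE : Tendsto (fun N => Complex.exp (∑ n ∈ range N, g n)) atTop (𝓝 (Complex.exp μ)) :=
    (Complex.continuous_exp.tendsto μ).comp hsummable.hasSum.tendsto_sum_nat
  have hq := q_tendsto s hs0 hne
  have hGam := Complex.GammaSeq_tendsto_Gamma s
  have hB : Tendsto (fun N : ℕ => Complex.GammaSeq s N * X
      * (Complex.exp ((s + N + 1/2) * Complex.log (s + N)) * Complex.exp (-(N:ℂ))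
          / ((N:ℂ)^s * (N.factorial : ℂ))))
      atTop (𝓝 (Complex.Gamma s * X * (Complex.exp s / (Real.sqrt (2 * Real.pi) : ℝ)))) :=
    (hGam.mul_const X).mul hq
  have hEB : (fun N : ℕ => Complex.GammaSeq s N * X
      * (Complex.exp ((s + N + 1/2) * Complex.log (s + N)) * Complex.exp (-(N:ℂ))
          / ((N:ℂ)^s * (N.factorial : ℂ))))
      =ᶠ[atTop] (fun N => Complex.exp (∑ n ∈ range N, g n)) := by
    filter_upwards [eventually_ge_atTop 1] with N hN
    have hN0C : (N:ℂ) ≠ 0 := Nat.cast_ne_zero.mpr (by omega)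
    have hNs0 : ((N:ℂ))^s ≠ 0 := by
      rw [Complex.cpow_def_of_ne_zero hN0C]
      exact Complex.exp_ne_zero _
    have hfac0 : ((N.factorial : ℕ) : ℂ) ≠ 0 := Nat.cast_ne_zero.mpr (Nat.factorial_pos N).ne'
    have hprod0 : (∏ n ∈ range N, (s + n)) ≠ 0 :=
      Finset.prod_ne_zero_iff.mpr fun n _ => hne n
    have hsN0 : s + (N:ℂ) ≠ 0 := hne N
    simp only [hg]
    rw [exp_telescope s hne N, ← hX]
    rw [Complex.GammaSeq]
    rw [Finset.prod_range_succ]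
    have hsplit : Complex.exp ((s + N + 1/2) * Complex.log (s + N))
        = Complex.exp ((s + N - 1/2) * Complex.log (s + N)) * (s + N) := by
      rw [show (s + N + 1/2) * Complex.log (s + N)
          = (s + N - 1/2) * Complex.log (s + N) + Complex.log (s + N) by ring]
      rw [Complex.exp_add, Complex.exp_log hsN0]
    rw [hsplit]
    field_simp
  have hkey : Complex.exp μ
      = Complex.Gamma s * X * (Complex.exp s / (Real.sqrt (2 * Real.pi) : ℝ)) :=
    tendsto_nhds_unique hE (hB.congr' hEB)
  have hsqrt0 : ((Real.sqrt (2 * Real.pi) : ℝ) : ℂ) ≠ 0 :=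
    Complex.ofReal_ne_zero.mpr (by positivity : 0 < Real.sqrt (2 * Real.pi)).ne'
  have hpow : s ^ (s - 1/2) = Complex.exp ((s - 1/2) * Complex.log s) := by
    rw [Complex.cpow_def_of_ne_zero hs0, mul_comm]
  have h1 : Complex.exp ((s - 1/2) * Complex.log s) * X = 1 := by
    rw [hX, ← Complex.exp_add]
    simp
  have h2 : Complex.exp (-s) * Complex.exp s = 1 := by
    rw [← Complex.exp_add]
    simp
  rw [hkey, hpow]
  rw [show ((Real.sqrt (2 * Real.pi) : ℝ) : ℂ) * Complex.exp ((s - 1/2) * Complex.log s)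
      * Complex.exp (-s)
      * (Complex.Gamma s * X * (Complex.exp s / (Real.sqrt (2 * Real.pi) : ℝ)))
    = Complex.Gamma s * (Complex.exp ((s - 1/2) * Complex.log s) * X)
      * (Complex.exp (-s) * Complex.exp s)
      * (((Real.sqrt (2 * Real.pi) : ℝ) : ℂ) / ((Real.sqrt (2 * Real.pi) : ℝ) : ℂ)) by ring]
  rw [h1, h2, div_self hsqrt0]
  ring
end

section
/- Let η:[0,∞)→ℝ be a decreasing continuous function, continuously differentiable outside a finite set of points, with η(0) = 1 and η(x) = 0 for all x ≥ 1. Then there exists x₀ ∈ (0,1] such that the function η₀ defined by η₀(x) = 1 − x/x₀ for 0 ≤ x ≤ x₀ and η₀(x) = 0 for x > x₀ satisfies ‖η₀''‖₁ ≤ ‖η''‖₁ and ‖η₀‖₂ ≤ ‖η‖₂. -/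
open Set MeasureTheory intervalIntegral

private theorem evar_le' {f : ℝ → ℝ} {s : Set ℝ} {c d : ℝ} (hf : MonotoneOn f s)
    (hmem : ∀ x ∈ s, f x ∈ Set.Icc c d) : eVariationOn f s ≤ ENNReal.ofReal (d - c) := by
  apply iSup_le _
  rintro ⟨n, ⟨u, hu, us⟩⟩
  calc
    (∑ i ∈ Finset.range n, edist (f (u (i + 1))) (f (u i))) =
        ∑ i ∈ Finset.range n, ENNReal.ofReal (f (u (i + 1)) - f (u i)) := by
      refine Finset.sum_congr rfl fun i hi => ?_
      rw [edist_dist, Real.dist_eq, abs_of_nonneg]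
      exact sub_nonneg_of_le (hf (us i) (us (i + 1)) (hu (Nat.le_succ _)))
    _ = ENNReal.ofReal (∑ i ∈ Finset.range n, (f (u (i + 1)) - f (u i))) := by
      rw [ENNReal.ofReal_sum_of_nonneg]
      intro i _
      exact sub_nonneg_of_le (hf (us i) (us (i + 1)) (hu (Nat.le_succ _)))
    _ = ENNReal.ofReal (f (u n) - f (u 0)) := by rw [Finset.sum_range_sub fun i => f (u i)]
    _ ≤ ENNReal.ofReal (d - c) := by
      apply ENNReal.ofReal_le_ofReal
      have h1 := hmem _ (us n)
      have h2 := hmem _ (us 0)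
      have := h1.2
      have := h2.1
      linarith

private theorem mono_off_finite (S : Finset ℝ) :
    ∀ (g : ℝ → ℝ) (a b : ℝ), a ≤ b → ContinuousOn g (Set.Icc a b) →
    (∀ x ∈ Set.Ioo a b, x ∉ S → DifferentiableAt ℝ g x ∧ 0 ≤ deriv g x) → g a ≤ g b := by
  classical
  induction S using Finset.induction_on with
  | empty =>
    intro g a b hab hg hg'
    have hmono : MonotoneOn g (Set.Icc a b) := by
      apply monotoneOn_of_deriv_nonneg (convex_Icc a b) hg
      · intro x hx
        rw [interior_Icc] at hx
        exact ((hg' x hx (by simp)).1).differentiableWithinAt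
      · intro x hx
        rw [interior_Icc] at hx
        exact (hg' x hx (by simp)).2
    exact hmono (Set.left_mem_Icc.2 hab) (Set.right_mem_Icc.2 hab) hab
  | insert c S' hc ih =>
    intro g a b hab hg hg'
    by_cases hmem : c ∈ Set.Ioo a b
    · have h1 : g a ≤ g c := by
        apply ih g a c (le_of_lt hmem.1) (hg.mono (Set.Icc_subset_Icc le_rfl (le_of_lt hmem.2)))
        intro x hx hxS
        refine hg' x ⟨hx.1, lt_trans hx.2 hmem.2⟩ ?_
        simp only [Finset.mem_insert, not_or]
        exact ⟨ne_of_lt hx.2, hxS⟩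
      have h2 : g c ≤ g b := by
        apply ih g c b (le_of_lt hmem.2) (hg.mono (Set.Icc_subset_Icc (le_of_lt hmem.1) le_rfl))
        intro x hx hxS
        refine hg' x ⟨lt_trans hmem.1 hx.1, hx.2⟩ ?_
        simp only [Finset.mem_insert, not_or]
        exact ⟨(ne_of_gt hx.1), hxS⟩
      linarith
    · apply ih g a b hab hg
      intro x hx hxS
      refine hg' x hx ?_
      simp only [Finset.mem_insert, not_or]
      exact ⟨fun h => hmem (h ▸ hx), hxS⟩

private theorem int_Ioc {a : ℝ} (ha : 0 < a) :
    ∫ x in Set.Ioc (0:ℝ) a, (1 - x / a) ^ 2 = a / 3 := by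
  rw [← intervalIntegral.integral_of_le (le_of_lt ha)]
  have key : ∀ x : ℝ, (1 - x / a) ^ 2 = 1 - (2 / a) * x + (1 / a ^ 2) * x ^ 2 := by
    intro x; field_simp; ring
  simp_rw [key]
  have i1 : IntervalIntegrable (fun x : ℝ => 1 - (2 / a) * x) volume 0 a := by
    apply IntervalIntegrable.sub intervalIntegrable_const
    exact (intervalIntegral.intervalIntegrable_id).const_mul _
  have i2 : IntervalIntegrable (fun x : ℝ => (1 / a ^ 2) * x ^ 2) volume 0 a :=
    (intervalIntegrable_pow 2).const_mul _
  rw [intervalIntegral.integral_add i1 i2, intervalIntegral.integral_sub intervalIntegrable_const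
    ((intervalIntegral.intervalIntegrable_id).const_mul _),
    intervalIntegral.integral_const_mul, intervalIntegral.integral_const_mul,
    integral_id, integral_pow, intervalIntegral.integral_const]
  simp only [smul_eq_mul]
  field_simp
  ring

private theorem tent_int {a : ℝ} (ha : 0 < a) :
    ∫ x in Set.Ioi (0:ℝ), (if x ≤ a then 1 - x / a else 0 : ℝ) ^ 2 = a / 3 := by
  have hsplit : Set.Ioi (0:ℝ) = Set.Ioc 0 a ∪ Set.Ioi a :=
    (Set.Ioc_union_Ioi_eq_Ioi (le_of_lt ha)).symm
  have heq0 : ∀ x ∈ Set.Ioi a, (if x ≤ a then 1 - x / a else 0 : ℝ) ^ 2 = 0 := by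
    intro x hx
    rw [if_neg (not_le.2 hx)]
    ring
  have heq1 : ∀ x ∈ Set.Ioc (0:ℝ) a,
      (if x ≤ a then 1 - x / a else 0 : ℝ) ^ 2 = (1 - x / a) ^ 2 := by
    intro x hx
    rw [if_pos hx.2]
  have hi1 : IntegrableOn (fun x : ℝ => (if x ≤ a then 1 - x / a else 0 : ℝ) ^ 2)
      (Set.Ioc 0 a) := by
    apply IntegrableOn.congr_fun (f := fun x : ℝ => (1 - x / a) ^ 2)
    · exact (ContinuousOn.integrableOn_Icc (by fun_prop)).mono_set Set.Ioc_subset_Icc_self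
    · intro x hx; exact (heq1 x hx).symm
    · exact measurableSet_Ioc
  have hi2 : IntegrableOn (fun x : ℝ => (if x ≤ a then 1 - x / a else 0 : ℝ) ^ 2)
      (Set.Ioi a) := by
    apply IntegrableOn.congr_fun (f := fun _ : ℝ => (0:ℝ))
    · exact integrableOn_zero
    · intro x hx; exact (heq0 x hx).symm
    · exact measurableSet_Ioi
  rw [hsplit, MeasureTheory.setIntegral_union (Set.Ioc_disjoint_Ioi le_rfl)
    measurableSet_Ioi hi1 hi2]
  rw [MeasureTheory.setIntegral_congr_fun measurableSet_Ioi heq0,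
      MeasureTheory.setIntegral_congr_fun measurableSet_Ioc heq1]
  simp [int_Ioc ha]

private theorem tent_deriv_eq {a : ℝ} (ha : 0 < a) (x : ℝ) (hx : 0 < x) :
    deriv (fun x : ℝ => if x ≤ a then 1 - x / a else 0) x
      = if x < a then -a⁻¹ else 0 := by
  set f : ℝ → ℝ := fun x => if x ≤ a then 1 - x / a else 0 with hf
  rcases lt_trichotomy x a with h | h | h
  · have hev : f =ᶠ[nhds x] (fun y => 1 - y / a) := by
      filter_upwards [Iio_mem_nhds h] with y hy
      have : y ≤ a := le_of_lt hy
      simp [hf, this]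
    rw [hev.deriv_eq, if_pos h]
    have : HasDerivAt (fun y : ℝ => 1 - y / a) (-(1/a)) x :=
      ((hasDerivAt_id x).div_const a).const_sub 1
    simpa [one_div] using this.deriv
  · subst h
    rw [if_neg (lt_irrefl x)]
    apply deriv_zero_of_not_differentiableAt
    intro hd
    have h1 : HasDerivWithinAt f 0 (Set.Ici x) x := by
      apply (hasDerivWithinAt_const x (Set.Ici x) (0:ℝ)).congr
      · intro y hy
        rcases eq_or_lt_of_le (Set.mem_Ici.1 hy) with rfl | hy'
        · simp [hf, div_self (ne_of_gt ha)]
        · simp [hf, not_le.2 hy']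
      · simp [hf, div_self (ne_of_gt ha)]
    have h2 : HasDerivWithinAt f (-(1/x)) (Set.Iic x) x := by
      apply (((hasDerivAt_id x).div_const x).const_sub 1).hasDerivWithinAt.congr
      · intro y hy
        have : y ≤ x := hy
        simp [hf, this]
      · simp [hf]
    have e1 : deriv f x = 0 := by
      have := hd.hasDerivAt.hasDerivWithinAt (s := Set.Ici x)
      exact uniqueDiffOn_Ici x x Set.self_mem_Ici |>.eq_deriv _ this h1
    have e2 : deriv f x = -(1/x) := by
      have := hd.hasDerivAt.hasDerivWithinAt (s := Set.Iic x)
      exact uniqueDiffOn_Iic x x Set.self_mem_Iic |>.eq_deriv _ this h2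
    rw [e1] at e2
    have hxne : (1:ℝ)/x ≠ 0 := one_div_ne_zero (ne_of_gt hx)
    exact hxne (by linarith)
  · have hev : f =ᶠ[nhds x] (fun _ => (0:ℝ)) := by
      filter_upwards [Ioi_mem_nhds h] with y hy
      simp [hf, not_le.2 (Set.mem_Ioi.1 hy)]
    rw [hev.deriv_eq, if_neg (not_lt.2 (le_of_lt h))]
    simp

private theorem tent_evar {a : ℝ} (ha : 0 < a) :
    eVariationOn (deriv (fun x : ℝ => if x ≤ a then 1 - x / a else 0)) (Set.Ioi 0)
      ≤ ENNReal.ofReal a⁻¹ := by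
  have heq : Set.EqOn (deriv (fun x : ℝ => if x ≤ a then 1 - x / a else 0))
      (fun x : ℝ => if x < a then -a⁻¹ else 0) (Set.Ioi 0) :=
    fun x hx => tent_deriv_eq ha x hx
  rw [eVariationOn.eq_of_eqOn heq]
  have h0 : (0:ℝ) ≤ a⁻¹ := le_of_lt (inv_pos.2 ha)
  have := evar_le' (f := fun x : ℝ => if x < a then -a⁻¹ else 0) (s := Set.Ioi 0)
    (c := -a⁻¹) (d := 0) ?_ ?_
  · simpa using this
  · intro x _ y _ hxy
    by_cases h1 : x < a <;> by_cases h2 : y < a <;> simp [h1, h2]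
    · linarith
    · exact absurd (lt_of_le_of_lt hxy h2) h1
  · intro x _
    by_cases h1 : x < a <;> simp [h1, h0]

private theorem eta_sq_integrable (η : ℝ → ℝ) (hcont : ContinuousOn η (Set.Ici 0))
    (h1 : ∀ x : ℝ, 1 ≤ x → η x = 0) :
    IntegrableOn (fun x : ℝ => η x ^ 2) (Set.Ioi 0) := by
  have hsplit : Set.Ioi (0:ℝ) = Set.Ioc 0 1 ∪ Set.Ioi 1 :=
    (Set.Ioc_union_Ioi_eq_Ioi zero_le_one).symm
  rw [hsplit]
  apply IntegrableOn.union
  · have : ContinuousOn (fun x : ℝ => η x ^ 2) (Set.Icc 0 1) :=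
      (hcont.mono Set.Icc_subset_Ici_self).pow 2
    exact this.integrableOn_Icc.mono_set Set.Ioc_subset_Icc_self
  · apply IntegrableOn.congr_fun (f := fun _ : ℝ => (0:ℝ))
    · exact integrableOn_zero
    · intro x hx
      simp [h1 x (le_of_lt hx)]
    · exact measurableSet_Ioi

private theorem eta_int_pos (η : ℝ → ℝ) (hcont : ContinuousOn η (Set.Ici 0))
    (hanti : AntitoneOn η (Set.Ici 0)) (h0 : η 0 = 1) (h1 : ∀ x : ℝ, 1 ≤ x → η x = 0) :
    0 < ∫ x in Set.Ioi (0:ℝ), η x ^ 2 := by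
  have hc0 : ContinuousWithinAt η (Set.Ici 0) 0 := hcont 0 (Set.mem_Ici.2 le_rfl)
  have hev : ∀ᶠ x in nhdsWithin 0 (Set.Ici 0), 1/2 < η x := by
    apply hc0.eventually
    rw [h0]
    exact eventually_gt_nhds (by norm_num)
  have hev' : {x : ℝ | 1/2 < η x} ∈ nhdsWithin 0 (Set.Ici 0) := hev
  rw [Metric.mem_nhdsWithin_iff] at hev'
  obtain ⟨ε, hε, hball⟩ := hev'
  set δ : ℝ := min (ε/2) 1 with hδdef
  have hδ0 : 0 < δ := lt_min (by linarith) one_pos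
  have hδ1 : δ ≤ 1 := min_le_right _ _
  have hδη : 1/2 < η δ := by
    apply hball
    refine ⟨Metric.mem_ball.2 ?_, Set.mem_Ici.2 (le_of_lt hδ0)⟩
    rw [Real.dist_eq, sub_zero, abs_of_pos hδ0]
    calc δ ≤ ε/2 := min_le_left _ _
      _ < ε := by linarith
  have hlow : ∀ x ∈ Set.Ioc (0:ℝ) δ, (1/2:ℝ)^2 ≤ η x ^ 2 := by
    intro x hx
    have hηx : 1/2 ≤ η x := le_trans (le_of_lt hδη)
      (hanti (Set.mem_Ici.2 (le_of_lt hx.1)) (Set.mem_Ici.2 (le_of_lt (lt_of_lt_of_le hx.1 hx.2))) hx.2)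
    have : (0:ℝ) ≤ 1/2 := by norm_num
    exact pow_le_pow_left₀ this hηx 2
  have hint : IntegrableOn (fun x : ℝ => η x ^ 2) (Set.Ioi 0) :=
    eta_sq_integrable η hcont h1
  have hintδ : IntegrableOn (fun x : ℝ => η x ^ 2) (Set.Ioc 0 δ) :=
    hint.mono_set (fun x hx => hx.1)
  have step1 : ∫ x in Set.Ioc (0:ℝ) δ, ((1:ℝ)/2)^2 ≤ ∫ x in Set.Ioc (0:ℝ) δ, η x ^ 2 :=
    setIntegral_mono_on (integrableOn_const measure_Ioc_lt_top.ne) hintδ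
      measurableSet_Ioc hlow
  have step2 : ∫ x in Set.Ioc (0:ℝ) δ, η x ^ 2 ≤ ∫ x in Set.Ioi (0:ℝ), η x ^ 2 := by
    apply setIntegral_mono_set hint
    · filter_upwards with x using sq_nonneg _
    · filter_upwards with x hx using hx.1
  have hconst : ∫ x in Set.Ioc (0:ℝ) δ, ((1:ℝ)/2)^2 = δ * (1/4) := by
    rw [setIntegral_const]
    rw [Real.volume_real_Ioc]
    rw [max_eq_left (by linarith)]
    norm_num
  have : 0 < δ * (1/4) := by positivity
  linarith [step1, step2, hconst ▸ step1]

private theorem exists_r (η : ℝ → ℝ)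
    (hcont : ContinuousOn η (Set.Ici 0))
    (hpiecewise : ∃ S : Finset ℝ, ∀ x ∈ Set.Ioi (0:ℝ) \ (S : Set ℝ), ContDiffAt ℝ 1 η x)
    (h0 : η 0 = 1) (h1 : ∀ x : ℝ, 1 ≤ x → η x = 0) {b : ℝ} (hb : 0 < b)
    (hlt : eVariationOn (deriv η) (Set.Ioi 0) < ENNReal.ofReal b) :
    ∃ r : ℝ, 1 ≤ r ∧ r < b ∧ 1/(3*r) ≤ ∫ x in Set.Ioi (0:ℝ), η x ^ 2 := by
  obtain ⟨S, hS⟩ := hpiecewise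
  set V := eVariationOn (deriv η) (Set.Ioi 0) with hV
  have hfin : V ≠ ⊤ := ne_top_of_lt hlt
  set r : ℝ := V.toReal with hr
  have hrb : r < b := by
    have := (ENNReal.toReal_lt_toReal hfin ENNReal.ofReal_ne_top).2 hlt
    rwa [ENNReal.toReal_ofReal (le_of_lt hb)] at this
  have hr0 : 0 ≤ r := ENNReal.toReal_nonneg
  have hd2 : deriv η 2 = 0 := by
    have hev : η =ᶠ[nhds 2] (fun _ => (0:ℝ)) := by
      filter_upwards [Ioi_mem_nhds one_lt_two] with y hy
      exact h1 y (le_of_lt hy)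
    rw [hev.deriv_eq]
    simp
  have hbound : ∀ c : ℝ, 0 < c → |deriv η c| ≤ r := by
    intro c hc
    have h := eVariationOn.edist_le (deriv η) (Set.mem_Ioi.2 hc) (Set.mem_Ioi.2 two_pos)
    rw [hd2, edist_dist, Real.dist_eq, sub_zero] at h
    calc |deriv η c| = (ENNReal.ofReal |deriv η c|).toReal :=
          (ENNReal.toReal_ofReal (abs_nonneg _)).symm
      _ ≤ r := ENNReal.toReal_mono hfin h
  have hlb : ∀ T : ℝ, 0 ≤ T → 1 - r * T ≤ η T := by
    intro T hT
    rcases eq_or_lt_of_le hT with rfl | hT'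
    · simp [h0]
    have key : η 0 + r * 0 ≤ η T + r * T := by
      apply mono_off_finite S (fun x => η x + r * x) 0 T (le_of_lt hT')
      · apply ContinuousOn.add (hcont.mono Set.Icc_subset_Ici_self)
        exact (continuous_const.mul continuous_id).continuousOn
      · intro x hx hxS
        have hder : ContDiffAt ℝ 1 η x := hS x ⟨Set.mem_Ioi.2 hx.1, hxS⟩
        have hdη : DifferentiableAt ℝ η x := hder.differentiableAt one_ne_zero
        have hlin : HasDerivAt (fun y : ℝ => r * y) r x := by
          simpa using (hasDerivAt_id x).const_mul r
        constructor
        · exact hdη.add hlin.differentiableAt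
        · rw [deriv_fun_add hdη hlin.differentiableAt, hlin.deriv]
          have hb1 := hbound x hx.1
          have hb2 := neg_abs_le (deriv η x)
          linarith
    rw [h0] at key
    linarith
  have hr1 : 1 ≤ r := by
    have := hlb 1 zero_le_one
    rw [h1 1 le_rfl] at this
    linarith
  refine ⟨r, hr1, hrb, ?_⟩
  have hrpos : 0 < r := lt_of_lt_of_le one_pos hr1
  set a : ℝ := r⁻¹ with hadef
  have hapos : 0 < a := inv_pos.2 hrpos
  have hint : IntegrableOn (fun x : ℝ => η x ^ 2) (Set.Ioi 0) :=
    eta_sq_integrable η hcont h1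
  have hinta : IntegrableOn (fun x : ℝ => η x ^ 2) (Set.Ioc 0 a) :=
    hint.mono_set (fun x hx => hx.1)
  have hintt : IntegrableOn (fun x : ℝ => (1 - x/a) ^ 2) (Set.Ioc 0 a) :=
    (ContinuousOn.integrableOn_Icc (by fun_prop)).mono_set Set.Ioc_subset_Icc_self
  have hptwise : ∀ x ∈ Set.Ioc (0:ℝ) a, (1 - x/a) ^ 2 ≤ η x ^ 2 := by
    intro x hx
    have hx0 : 0 ≤ x := le_of_lt hx.1
    have hxa : x / a ≤ 1 := (div_le_one hapos).2 hx.2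
    have h1' : 0 ≤ 1 - x/a := by linarith
    have h2' : 1 - x/a ≤ η x := by
      have := hlb x hx0
      have : 1 - r * x ≤ η x := this
      rw [hadef]
      have : x / r⁻¹ = r * x := by field_simp
      rw [this]
      linarith [hlb x hx0]
    exact pow_le_pow_left₀ h1' h2' 2
  have step1 : ∫ x in Set.Ioc (0:ℝ) a, (1 - x/a) ^ 2 ≤ ∫ x in Set.Ioc (0:ℝ) a, η x ^ 2 :=
    setIntegral_mono_on hintt hinta measurableSet_Ioc hptwise
  have step2 : ∫ x in Set.Ioc (0:ℝ) a, η x ^ 2 ≤ ∫ x in Set.Ioi (0:ℝ), η x ^ 2 := by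
    apply setIntegral_mono_set hint
    · filter_upwards with x using sq_nonneg _
    · filter_upwards with x hx using hx.1
  have hval : ∫ x in Set.Ioc (0:ℝ) a, (1 - x/a) ^ 2 = a / 3 := int_Ioc hapos
  have : 1/(3*r) = a/3 := by
    rw [hadef]
    field_simp
  linarith [hval ▸ step1]



/-- Tent functions are extremal: one can replace a decreasing cutoff `η` by a
piecewise-linear tent `η₀` without increasing either the total variation of the
derivative (`‖η''‖₁`) or the `L²` norm. -/
theorem tent_function_extremal (η : ℝ → ℝ)
    (hcont : ContinuousOn η (Set.Ici 0))
    (hanti : AntitoneOn η (Set.Ici 0))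
    (hpiecewise : ∃ S : Finset ℝ, ∀ x ∈ Set.Ioi (0:ℝ) \ (S : Set ℝ), ContDiffAt ℝ 1 η x)
    (h0 : η 0 = 1) (h1 : ∀ x : ℝ, 1 ≤ x → η x = 0) :
    ∃ x₀ ∈ Set.Ioc (0:ℝ) 1,
      eVariationOn (deriv (fun x : ℝ => if x ≤ x₀ then 1 - x / x₀ else 0)) (Set.Ioi 0)
          ≤ eVariationOn (deriv η) (Set.Ioi 0) ∧
      (∫ x in Set.Ioi (0:ℝ), (if x ≤ x₀ then 1 - x / x₀ else 0 : ℝ) ^ 2)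
          ≤ ∫ x in Set.Ioi (0:ℝ), (η x) ^ 2 := by
  set I := ∫ x in Set.Ioi (0:ℝ), η x ^ 2 with hI
  by_cases hI3 : 1/3 ≤ I
  · refine ⟨1, ⟨one_pos, le_rfl⟩, ?_, ?_⟩
    · refine le_trans (tent_evar one_pos) ?_
      by_contra hlt
      push_neg at hlt
      rw [inv_one] at hlt
      obtain ⟨r, hr1, hrb, _⟩ := exists_r η hcont hpiecewise h0 h1 one_pos hlt
      linarith
    · rw [tent_int one_pos]
      linarith
  · push_neg at hI3
    have hIpos : 0 < I := eta_int_pos η hcont hanti h0 h1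
    have h3 : (0:ℝ) < 3 * I := by linarith
    refine ⟨3 * I, ⟨h3, by linarith⟩, ?_, ?_⟩
    · refine le_trans (tent_evar h3) ?_
      by_contra hlt
      push_neg at hlt
      obtain ⟨r, hr1, hrb, hrI⟩ := exists_r η hcont hpiecewise h0 h1 (inv_pos.2 h3) hlt
      have hrpos : (0:ℝ) < r := by linarith
      have e1 : 1 ≤ I * (3 * r) := by
        rw [div_le_iff₀ (by positivity)] at hrI
        linarith
      have e2 : r * (3 * I) < (3 * I)⁻¹ * (3 * I) := mul_lt_mul_of_pos_right hrb h3
      rw [inv_mul_cancel₀ (ne_of_gt h3)] at e2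
      nlinarith
    · rw [tent_int h3]
      linarith
end

section
/- Let g:[0,∞)→ℝ be continuous, piecewise C¹, with g and g' of bounded total variation, satisfying: ∫_0^∞ g(t)dt = 1; 0 ≤ g ≤ 1; g(t) = 1 for 0 ≤ t ≤ 1−δ and g(t) = 0 for t ≥ 1+δ where 0 < δ ≤ 1/2; and g(1+t) = 1 − g(1−t) for 0 ≤ t ≤ δ. Set h(x) = ⌊1/x⌋ − ∑_{n=1}^∞ g(nx) for x > 0. Then for all x > 0, |h(x)| ≤ 1/2 + (x/16)·∫_0^∞ |g''(t)| dt, where ∫|g''| is the total variation of g'. -/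
open MeasureTheory Set intervalIntegral

set_option maxHeartbeats 1000000


/-- The smoothing error `h(x) = ⌊1/x⌋ − ∑ g(nx)` is bounded by
`1/2 + (x/16)·‖g''‖₁`, where `‖g''‖₁` is the total variation of `g'`. -/
theorem smoothing_error_bound (g : ℝ → ℝ) (δ : ℝ) (hδ0 : 0 < δ) (hδ : δ ≤ 1 / 2)
    (hcont : ContinuousOn g (Set.Ici 0))
    (hpiecewise : ∃ S : Finset ℝ, ∀ x ∈ Set.Ioi (0:ℝ) \ (S : Set ℝ), DifferentiableAt ℝ g x)
    (hgBV : eVariationOn g (Set.Ici 0) ≠ ⊤)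
    (hg'BV : eVariationOn (deriv g) (Set.Ici 0) ≠ ⊤)
    (hint : (∫ t in Set.Ioi (0:ℝ), g t) = 1)
    (hrange : ∀ t : ℝ, 0 ≤ t → 0 ≤ g t ∧ g t ≤ 1)
    (hone : ∀ t : ℝ, 0 ≤ t → t ≤ 1 - δ → g t = 1)
    (hzero : ∀ t : ℝ, 1 + δ ≤ t → g t = 0)
    (hsym : ∀ t : ℝ, 0 ≤ t → t ≤ δ → g (1 + t) = 1 - g (1 - t)) :
    ∀ x : ℝ, 0 < x →
      |(⌊1 / x⌋ : ℝ) - ∑' n : ℕ, g ((n + 1) * x)| ≤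
        1 / 2 + x / 16 * (eVariationOn (deriv g) (Set.Ici 0)).toReal := by
  classical
  obtain ⟨S, hS⟩ := hpiecewise
  intro x hx
  set V : ℝ := (eVariationOn (deriv g) (Set.Ici 0)).toReal with hVdef
  have hV0 : 0 ≤ V := ENNReal.toReal_nonneg
  have hg1 : g 1 = 1/2 := by
    have h := hsym 0 le_rfl hδ0.le
    norm_num at h
    linarith
  -- interval integrability of g
  have hgint : ∀ a b : ℝ, 0 ≤ a → 0 ≤ b → IntervalIntegrable g volume a b := by
    intro a b ha hb
    apply ContinuousOn.intervalIntegrable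
    exact hcont.mono (fun s hs => le_trans (le_min ha hb) hs.1)
  -- boundedness of deriv g on Ici 0
  have hCbd : ∀ s : ℝ, 0 ≤ s → |deriv g s| ≤ |deriv g 0| + V := by
    intro s hs
    have h1 : dist (deriv g s) (deriv g 0) ≤ V := by
      rw [dist_edist]
      exact ENNReal.toReal_mono hg'BV (eVariationOn.edist_le (deriv g) hs (le_refl (0:ℝ)))
    rw [Real.dist_eq] at h1
    have h2 := abs_sub_abs_le_abs_sub (deriv g s) (deriv g 0)
    linarith
  have hg'int : ∀ a b : ℝ, 0 ≤ a → 0 ≤ b → IntervalIntegrable (deriv g) volume a b := by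
    intro a b ha hb
    rw [intervalIntegrable_iff, Set.uIoc]
    apply (integrable_const (|deriv g 0| + V)).mono'
      (measurable_deriv g).aestronglyMeasurable.restrict
    filter_upwards [ae_restrict_mem measurableSet_Ioc] with s hs
    simpa using hCbd s (le_trans (le_min ha hb) hs.1.le)
  -- FTC for (s - c) * g s
  have hftc : ∀ a b c : ℝ, 0 < a → a ≤ b →
      ∫ s in a..b, (g s + (s - c) * deriv g s) = (b - c) * g b - (a - c) * g a := by
    intro a b c ha hab
    apply integral_eq_of_hasDerivAt_off_countable_of_le (fun s => (s - c) * g s)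
      (fun s => g s + (s - c) * deriv g s) hab S.countable_toSet
    · exact (continuousOn_id.sub continuousOn_const).mul
        (hcont.mono (fun s hs => le_trans ha.le hs.1))
    · intro s hs
      have hd : DifferentiableAt ℝ g s := hS s ⟨lt_trans ha hs.1.1, hs.2⟩
      have h2 := ((hasDerivAt_id s).sub_const c).mul hd.hasDerivAt
      exact h2.congr_deriv (by simp only [id_eq]; ring)
    · exact (hgint a b ha.le (ha.le.trans hab)).add
        ((hg'int a b ha.le (ha.le.trans hab)).continuousOn_mul
          (continuousOn_id.sub continuousOn_const))
  -- FTC for g itself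
  have hftc0 : ∀ c d : ℝ, 0 < c → c ≤ d → ∫ s in c..d, deriv g s = g d - g c := by
    intro c d hc hcd
    exact integral_eq_of_hasDerivAt_off_countable_of_le g (deriv g) hcd
      S.countable_toSet (hcont.mono fun s hs => le_trans hc.le hs.1)
      (fun s hs => (hS s ⟨lt_trans hc hs.1.1, hs.2⟩).hasDerivAt)
      (hg'int c d hc.le (hc.le.trans hcd))
  -- linear integral
  have hlinint : ∀ c d e : ℝ, ∫ s in c..d, (s - e) = ((d-e)^2 - (c-e)^2)/2 := by
    intro c d e
    rw [intervalIntegral.integral_sub intervalIntegrable_id intervalIntegrable_const]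
    simp [integral_id]
    ring
  -- vanishing of deriv on flat pieces
  have hd0 : ∀ s : ℝ, 0 < s → s < 1 - δ → deriv g s = 0 := by
    intro s h1 h2
    have he : g =ᶠ[nhds s] fun _ => (1:ℝ) := by
      filter_upwards [Ioo_mem_nhds h1 h2] with y hy
      exact hone y hy.1.le hy.2.le
    rw [he.deriv_eq]
    exact deriv_const s 1
  have hd1 : ∀ s : ℝ, 1 + δ < s → deriv g s = 0 := by
    intro s h1
    have he : g =ᶠ[nhds s] fun _ => (0:ℝ) := by
      filter_upwards [Ioi_mem_nhds h1] with y hy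
      exact hzero y hy.le
    rw [he.deriv_eq]
    exact deriv_const s 0
  -- mean value type results
  have hslope_le : ∀ c d : ℝ, 0 < c → c < d →
      ∃ p, c < p ∧ p < d ∧ deriv g p ≤ (g d - g c)/(d - c) := by
    intro c d hc hcd
    by_contra hcon
    push_neg at hcon
    have hintg : IntegrableOn (fun s => deriv g s - (g d - g c)/(d - c)) (Ioc c d) volume := by
      rw [← intervalIntegrable_iff_integrableOn_Ioc_of_le hcd.le]
      exact (hg'int c d hc.le (hc.le.trans hcd.le)).sub intervalIntegrable_const
    have hpos : 0 < ∫ s in Ioc c d, (deriv g s - (g d - g c)/(d - c)) := by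
      rw [setIntegral_pos_iff_support_of_nonneg_ae ?_ hintg]
      · apply lt_of_lt_of_le _ (measure_mono (?_ :
          Ioo c d ⊆ Function.support (fun s => deriv g s - (g d - g c)/(d-c)) ∩ Ioc c d))
        · rw [Real.volume_Ioo]
          exact ENNReal.ofReal_pos.2 (by linarith)
        · intro s hs
          refine ⟨?_, Ioo_subset_Ioc_self hs⟩
          simp only [Function.mem_support]
          exact sub_ne_zero.2 (ne_of_gt (hcon s hs.1 hs.2))
      · have hne : ∀ᵐ (s : ℝ), s ≠ d := by
          refine ae_iff.2 ?_
          simpa using measure_singleton d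
        filter_upwards [ae_restrict_mem measurableSet_Ioc, ae_restrict_of_ae hne] with s hs hsd
        have : s < d := lt_of_le_of_ne hs.2 hsd
        exact le_of_lt (sub_pos.2 (hcon s hs.1 this))
    have hz : ∫ s in Ioc c d, (deriv g s - (g d - g c)/(d - c)) = 0 := by
      rw [← intervalIntegral.integral_of_le hcd.le,
        intervalIntegral.integral_sub (hg'int c d hc.le (hc.le.trans hcd.le))
          intervalIntegrable_const, hftc0 c d hc hcd.le, intervalIntegral.integral_const]
      have hdc : d - c ≠ 0 := ne_of_gt (by linarith : (0:ℝ) < d - c)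
      rw [smul_eq_mul]
      field_simp
      ring
    exact absurd hz (ne_of_gt hpos)
  have hslope_ge : ∀ c d : ℝ, 0 < c → c < d →
      ∃ p, c < p ∧ p < d ∧ (g d - g c)/(d - c) ≤ deriv g p := by
    intro c d hc hcd
    by_contra hcon
    push_neg at hcon
    have hintg : IntegrableOn (fun s => (g d - g c)/(d - c) - deriv g s) (Ioc c d) volume := by
      rw [← intervalIntegrable_iff_integrableOn_Ioc_of_le hcd.le]
      exact intervalIntegrable_const.sub (hg'int c d hc.le (hc.le.trans hcd.le))
    have hpos : 0 < ∫ s in Ioc c d, ((g d - g c)/(d - c) - deriv g s) := by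
      rw [setIntegral_pos_iff_support_of_nonneg_ae ?_ hintg]
      · apply lt_of_lt_of_le _ (measure_mono (?_ :
          Ioo c d ⊆ Function.support (fun s => (g d - g c)/(d-c) - deriv g s) ∩ Ioc c d))
        · rw [Real.volume_Ioo]
          exact ENNReal.ofReal_pos.2 (by linarith)
        · intro s hs
          refine ⟨?_, Ioo_subset_Ioc_self hs⟩
          simp only [Function.mem_support]
          exact sub_ne_zero.2 (ne_of_gt (hcon s hs.1 hs.2))
      · have hne : ∀ᵐ (s : ℝ), s ≠ d := by
          refine ae_iff.2 ?_
          simpa using measure_singleton d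
        filter_upwards [ae_restrict_mem measurableSet_Ioc, ae_restrict_of_ae hne] with s hs hsd
        have : s < d := lt_of_le_of_ne hs.2 hsd
        exact le_of_lt (sub_pos.2 (hcon s hs.1 this))
    have hz : ∫ s in Ioc c d, ((g d - g c)/(d - c) - deriv g s) = 0 := by
      rw [← intervalIntegral.integral_of_le hcd.le,
        intervalIntegral.integral_sub intervalIntegrable_const
          (hg'int c d hc.le (hc.le.trans hcd.le)), hftc0 c d hc hcd.le,
        intervalIntegral.integral_const]
      have hdc : d - c ≠ 0 := ne_of_gt (by linarith : (0:ℝ) < d - c)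
      rw [smul_eq_mul]
      field_simp
      ring
    exact absurd hz (ne_of_gt hpos)
  rcases le_or_gt 1 x with hA | hB
  · -- Case x ≥ 1 : only the first term survives
    have htsumA : ∑' n : ℕ, g ((n + 1) * x) = g x := by
      rw [tsum_eq_sum (s := ({0} : Finset ℕ)) ?_]
      · simp
      · intro n hn
        apply hzero
        have hn1 : 1 ≤ n := Nat.one_le_iff_ne_zero.2 (by simpa using hn)
        have h2 : (2:ℝ) ≤ (n:ℝ) + 1 := by exact_mod_cast Nat.succ_le_succ hn1
        have h3 : (2:ℝ) * 1 ≤ ((n:ℝ) + 1) * x :=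
          mul_le_mul h2 hA (by linarith) (by linarith)
        linarith
    rw [htsumA]
    rcases eq_or_lt_of_le hA with heq | hlt
    · -- x = 1
      rw [← heq, hg1]
      have hfl1 : (⌊(1:ℝ)/1⌋ : ℝ) = 1 := by norm_num
      rw [hfl1, show (1:ℝ) - 1/2 = 1/2 by norm_num,
        abs_of_nonneg (by norm_num : (0:ℝ) ≤ 1/2)]
      linarith
    · -- x > 1
      have hfl : ⌊1/x⌋ = 0 := by
        apply Int.floor_eq_zero_iff.2
        constructor
        · positivity
        · rw [div_lt_one (by linarith)]
          exact hlt
      rw [hfl]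
      rw [Int.cast_zero, zero_sub, abs_neg, abs_of_nonneg (hrange x (by linarith)).1]
      by_cases hgx : g x ≤ 1/2
      · have h16 : 0 ≤ x/16 * V := by positivity
        linarith
      · push_neg at hgx
        have hxlt : x < 1 + δ := by
          by_contra hge
          push_neg at hge
          rw [hzero x hge] at hgx
          linarith
        set t := x - 1 with ht
        clear_value t
        have ht0 : 0 < t := by simp only [ht]; linarith
        have htδ : t < δ := by simp only [ht]; linarith
        have hsx : g x = 1 - g (1 - t) := by
          have h := hsym t ht0.le htδ.le
          rw [show (1:ℝ) + t = x by simp only [ht]; ring] at h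
          exact h
        set a := g x - 1/2 with ha
        clear_value a
        have ha0 : 0 < a := by simp only [ha]; linarith
        have ha2 : a ≤ 1/2 := by
          have := (hrange x (by linarith)).2
          simp only [ha]; linarith
        have hg1t : g (1 - t) = 1/2 - a := by simp only [ha]; linarith
        obtain ⟨p₁, hp₁a, hp₁b, hp₁⟩ := hslope_le (1 - δ) (1 - t) (by linarith) (by linarith)
        obtain ⟨p₂, hp₂a, hp₂b, hp₂⟩ := hslope_ge (1 - t) 1 (by linarith) (by linarith)
        obtain ⟨p₃, hp₃a, hp₃b, hp₃⟩ := hslope_ge 1 x (by linarith) (by linarith)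
        obtain ⟨p₄, hp₄a, hp₄b, hp₄⟩ := hslope_le x (1 + δ) (by linarith) (by linarith)
        have e₁ : deriv g p₁ ≤ -(1 + 2*a) := by
          have hnum : g (1 - t) - g (1 - δ) = -(1/2 + a) := by
            rw [hg1t, hone (1-δ) (by linarith) (by linarith)]; ring
          rw [hnum, show (1 - t) - (1 - δ) = δ - t by ring] at hp₁
          have hkey : -(1/2 + a)/(δ - t) ≤ -(1+2*a) := by
            rw [div_le_iff₀ (by linarith : (0:ℝ) < δ - t)]
            have hpr := mul_nonneg (by linarith : (0:ℝ) ≤ 1 + 2*a)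
              (by linarith : (0:ℝ) ≤ 1/2 - (δ - t))
            linarith [hpr]
          linarith
        have e₂ : 2*a ≤ deriv g p₂ := by
          have hnum : g 1 - g (1 - t) = a := by rw [hg1, hg1t]; ring
          rw [hnum, show (1:ℝ) - (1 - t) = t by ring] at hp₂
          have hkey : 2*a ≤ a/t := by
            rw [le_div_iff₀ ht0]
            have hpr := mul_nonneg ha0.le (by linarith : (0:ℝ) ≤ 1 - 2*t)
            linarith [hpr]
          linarith
        have e₃ : 2*a ≤ deriv g p₃ := by
          have hnum : g x - g 1 = a := by rw [hg1, ha]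
          rw [hnum, show x - 1 = t by rw [ht]] at hp₃
          have hkey : 2*a ≤ a/t := by
            rw [le_div_iff₀ ht0]
            have hpr := mul_nonneg ha0.le (by linarith : (0:ℝ) ≤ 1 - 2*t)
            linarith [hpr]
          linarith
        have e₄ : deriv g p₄ ≤ -(1 + 2*a) := by
          have hnum : g (1 + δ) - g x = -(1/2 + a) := by
            rw [hzero (1+δ) le_rfl]; simp only [ha]; ring
          rw [hnum, show (1 + δ) - x = δ - t by simp only [ht]; ring] at hp₄
          have hkey : -(1/2 + a)/(δ - t) ≤ -(1+2*a) := by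
            rw [div_le_iff₀ (by linarith : (0:ℝ) < δ - t)]
            have hpr := mul_nonneg (by linarith : (0:ℝ) ≤ 1 + 2*a)
              (by linarith : (0:ℝ) ≤ 1/2 - (δ - t))
            linarith [hpr]
          linarith
        set p₀ : ℝ := (1 - δ)/2 with hp₀
        have hdp₀ : deriv g p₀ = 0 := hd0 p₀ (by simp only [hp₀]; linarith) (by simp only [hp₀]; linarith)
        set p₅ : ℝ := 2 + δ with hp₅
        have hdp₅ : deriv g p₅ = 0 := hd1 p₅ (by simp only [hp₅]; linarith)
        -- ordering facts
        have ho₀ : p₀ < p₁ := by simp only [hp₀]; linarith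
        have ho₁ : p₁ < p₂ := by linarith
        have ho₂ : p₂ < p₃ := by linarith
        have ho₃ : p₃ < p₄ := by linarith
        have ho₄ : p₄ < p₅ := by simp only [hp₅]; linarith
        have hpos₀ : (0:ℝ) ≤ p₀ := by simp only [hp₀]; linarith
        set u : ℕ → ℝ := fun i =>
          if i = 0 then p₀ else if i = 1 then p₁ else if i = 2 then p₂ else
          if i = 3 then p₃ else if i = 4 then p₄ else p₅ with hu_def
        have hu : Monotone u := by
          apply monotone_nat_of_le_succ
          intro i
          rcases i with _|_|_|_|_|i <;> simp [hu_def] <;> linarith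
        have hus : ∀ i, u i ∈ Set.Ici (0:ℝ) := by
          intro i
          rcases i with _|_|_|_|_|i <;> simp [hu_def, Set.mem_Ici] <;> linarith
        have hvchain := eVariationOn.sum_le (f := deriv g) (n := 5) hu hus
        have hreal : ∑ i ∈ Finset.range 5, dist (deriv g (u (i+1))) (deriv g (u i)) ≤ V := by
          have h1 := ENNReal.toReal_mono hg'BV hvchain
          rw [ENNReal.toReal_sum (fun i _ => edist_ne_top _ _)] at h1
          simp only [← dist_edist] at h1
          exact h1
        simp only [Finset.sum_range_succ, Finset.sum_range_zero, hu_def] at hreal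
        norm_num at hreal
        rw [Real.dist_eq, Real.dist_eq, Real.dist_eq, Real.dist_eq, Real.dist_eq] at hreal
        have t1 : 1 + 2*a ≤ |deriv g p₁ - deriv g p₀| := by
          rw [hdp₀]
          have := neg_le_abs (deriv g p₁ - 0)
          linarith
        have t2 : 1 + 4*a ≤ |deriv g p₂ - deriv g p₁| := by
          have := le_abs_self (deriv g p₂ - deriv g p₁)
          linarith
        have t3 : (0:ℝ) ≤ |deriv g p₃ - deriv g p₂| := abs_nonneg _
        have t4 : 1 + 4*a ≤ |deriv g p₄ - deriv g p₃| := by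
          have := neg_le_abs (deriv g p₄ - deriv g p₃)
          linarith
        have t5 : 1 + 2*a ≤ |deriv g p₅ - deriv g p₄| := by
          rw [hdp₅]
          have := le_abs_self (0 - deriv g p₄)
          linarith
        have hV16 : 4 + 12*a ≤ V := by linarith
        have hgxa : g x = 1/2 + a := by simp only [ha]; ring
        rw [hgxa]
        linarith [mul_nonneg (sub_nonneg.2 hlt.le) hV0, hV16, ha2]
  · -- Case x < 1 : Euler–Maclaurin / midpoint argument
    have hLBVloc : LocallyBoundedVariationOn (deriv g) (Set.Ici 0) :=
      BoundedVariationOn.locallyBoundedVariationOn hg'BV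
    have hkey : ∀ p q : ℝ, 0 ≤ p → p ≤ q →
        |deriv g q - deriv g p| ≤ variationOnFromTo (deriv g) (Set.Ici 0) p q := by
      intro p q hp hpq
      rw [variationOnFromTo.eq_of_le _ _ hpq, ← Real.dist_eq, dist_edist]
      apply ENNReal.toReal_mono (hLBVloc p q hp (hp.trans hpq))
      exact eVariationOn.edist_le _ ⟨hp.trans hpq, hpq, le_rfl⟩ ⟨hp, le_rfl, hpq⟩
    set P : ℝ → ℝ := fun y => (variationOnFromTo (deriv g) (Set.Ici 0) 0 y + deriv g y)/2
      with hPdef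
    set Q : ℝ → ℝ := fun y => (variationOnFromTo (deriv g) (Set.Ici 0) 0 y - deriv g y)/2
      with hQdef
    have hPQ : ∀ y, deriv g y = P y - Q y := by
      intro y; simp only [hPdef, hQdef]; ring
    have hPmono : MonotoneOn P (Set.Ici 0) := by
      intro p hp q hq hpq
      have h1 := abs_le.1 (hkey p q hp hpq)
      have h2 := variationOnFromTo.add hLBVloc Set.self_mem_Ici hp hq
      simp only [hPdef]
      linarith [h1.1]
    have hQmono : MonotoneOn Q (Set.Ici 0) := by
      intro p hp q hq hpq
      have h1 := abs_le.1 (hkey p q hp hpq)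
      have h2 := variationOnFromTo.add hLBVloc Set.self_mem_Ici hp hq
      simp only [hQdef]
      linarith [h1.2]
    have hvarle : ∀ p q : ℝ, 0 ≤ p → p ≤ q →
        variationOnFromTo (deriv g) (Set.Ici 0) p q ≤ V := by
      intro p q hp hpq
      rw [variationOnFromTo.eq_of_le _ _ hpq]
      exact ENNReal.toReal_mono hg'BV (eVariationOn.mono _ Set.inter_subset_left)
    have hPint : ∀ p q : ℝ, 0 ≤ p → 0 ≤ q → IntervalIntegrable P volume p q :=
      fun p q hp hq =>
        (hPmono.mono (fun s hs => le_trans (le_min hp hq) hs.1)).intervalIntegrable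
    have hQint : ∀ p q : ℝ, 0 ≤ p → 0 ≤ q → IntervalIntegrable Q volume p q :=
      fun p q hp hq =>
        (hQmono.mono (fun s hs => le_trans (le_min hp hq) hs.1)).intervalIntegrable
    -- bounds for the two half-cell integrals against a monotone function
    have hhalfA : ∀ F : ℝ → ℝ, MonotoneOn F (Set.Ici 0) →
        (∀ p q : ℝ, 0 ≤ p → 0 ≤ q → IntervalIntegrable F volume p q) →
        ∀ p q : ℝ, 0 < p → p ≤ q →
        F p * ((q-p)^2/2) ≤ (∫ s in p..q, (s - p) * F s) ∧
          (∫ s in p..q, (s - p) * F s) ≤ F q * ((q-p)^2/2) := by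
      intro F hF hFi p q hp hpq
      have hq0 : (0:ℝ) ≤ q := hp.le.trans hpq
      have hki : IntervalIntegrable (fun s => (s - p) * F s) volume p q :=
        (hFi p q hp.le hq0).continuousOn_mul (continuousOn_id.sub continuousOn_const)
      have hconst : ∀ c : ℝ, (∫ s in p..q, (s - p) * c) = c * ((q-p)^2/2) := by
        intro c
        rw [intervalIntegral.integral_mul_const, hlinint p q p]
        ring
      constructor
      · rw [← hconst (F p)]
        apply intervalIntegral.integral_mono_on hpq
          (((continuous_id.sub continuous_const).mul continuous_const).intervalIntegrable p q) hki
        intro s hs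
        exact mul_le_mul_of_nonneg_left
          (hF (Set.mem_Ici.2 hp.le) (Set.mem_Ici.2 (hp.le.trans hs.1)) hs.1)
          (sub_nonneg.2 hs.1)
      · rw [← hconst (F q)]
        apply intervalIntegral.integral_mono_on hpq hki
          (((continuous_id.sub continuous_const).mul continuous_const).intervalIntegrable p q)
        intro s hs
        exact mul_le_mul_of_nonneg_left
          (hF (Set.mem_Ici.2 (hp.le.trans hs.1)) (Set.mem_Ici.2 hq0) hs.2)
          (sub_nonneg.2 hs.1)
    have hhalfB : ∀ F : ℝ → ℝ, MonotoneOn F (Set.Ici 0) →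
        (∀ p q : ℝ, 0 ≤ p → 0 ≤ q → IntervalIntegrable F volume p q) →
        ∀ p q : ℝ, 0 < p → p ≤ q →
        -(F q * ((q-p)^2/2)) ≤ (∫ s in p..q, (s - q) * F s) ∧
          (∫ s in p..q, (s - q) * F s) ≤ -(F p * ((q-p)^2/2)) := by
      intro F hF hFi p q hp hpq
      have hq0 : (0:ℝ) ≤ q := hp.le.trans hpq
      have hki : IntervalIntegrable (fun s => (s - q) * F s) volume p q :=
        (hFi p q hp.le hq0).continuousOn_mul (continuousOn_id.sub continuousOn_const)
      have hconst : ∀ c : ℝ, (∫ s in p..q, (s - q) * c) = -(c * ((q-p)^2/2)) := by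
        intro c
        rw [intervalIntegral.integral_mul_const, hlinint p q q]
        ring
      constructor
      · rw [← hconst (F q)]
        apply intervalIntegral.integral_mono_on hpq
          (((continuous_id.sub continuous_const).mul continuous_const).intervalIntegrable p q) hki
        intro s hs
        exact mul_le_mul_of_nonpos_left
          (hF (Set.mem_Ici.2 (hp.le.trans hs.1)) (Set.mem_Ici.2 hq0) hs.2)
          (sub_nonpos.2 hs.2)
      · rw [← hconst (F p)]
        apply intervalIntegral.integral_mono_on hpq hki
          (((continuous_id.sub continuous_const).mul continuous_const).intervalIntegrable p q)
        intro s hs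
        exact mul_le_mul_of_nonpos_left
          (hF (Set.mem_Ici.2 hp.le) (Set.mem_Ici.2 (hp.le.trans hs.1)) hs.1)
          (sub_nonpos.2 hs.2)
    -- the grid
    set N : ℕ := ⌈(1+δ)/x⌉₊ with hNdef
    have hNx : 1 + δ ≤ (N:ℝ) * x := by
      rw [← div_le_iff₀ hx]
      exact Nat.le_ceil _
    set u : ℕ → ℝ := fun i => ((i:ℝ) + 1/2) * x with hu_def
    have hu0 : ∀ i : ℕ, 0 < u i := by
      intro i; simp only [hu_def]; positivity
    have hule : ∀ i : ℕ, u i ≤ u (i+1) := by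
      intro i; simp only [hu_def]; push_cast; linarith [hx.le]
    have hL1 : u 0 < 1 - δ := by
      simp only [hu_def]; push_cast; linarith [hB, hδ]
    have hB1 : 1 + δ < u N := by
      simp only [hu_def]; push_cast; linarith [hNx, hx]
    have htsumB : ∑' n : ℕ, g ((n + 1) * x) = ∑ n ∈ Finset.range N, g ((n + 1) * x) := by
      apply tsum_eq_sum
      intro n hn
      apply hzero
      have hnN : (N:ℝ) ≤ (n:ℝ) := by exact_mod_cast Nat.le_of_not_lt (by simpa using hn)
      linarith [hNx, hx, mul_nonneg (by linarith : (0:ℝ) ≤ (n:ℝ) + 1 - (N:ℝ)) hx.le]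
    -- per-cell estimate
    have cell : ∀ n : ℕ,
        (x^2/8) * (P (u n) - P (u (n+1))) ≤
          x * g (((n:ℝ) + 1) * x) - ∫ s in (u n)..(u (n+1)), g s ∧
        x * g (((n:ℝ) + 1) * x) - ∫ s in (u n)..(u (n+1)), g s ≤
          (x^2/8) * (Q (u (n+1)) - Q (u n)) := by
      intro n
      set a' := u n with ha'
      set m' := ((n:ℝ) + 1) * x with hm'
      set b' := u (n+1) with hb'
      have hma : m' - a' = x/2 := by
        simp only [ha', hm', hu_def]; push_cast; ring
      have hbm : b' - m' = x/2 := by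
        simp only [hb', hm', hu_def]; push_cast; ring
      have ha0 : 0 < a' := hu0 n
      have ham : a' ≤ m' := by linarith
      have hm0 : 0 < m' := by linarith
      have hmb : m' ≤ b' := by linarith
      have hb0 : 0 < b' := by linarith
      have hker1 : IntervalIntegrable (fun s => (s - a') * deriv g s) volume a' m' :=
        (hg'int a' m' ha0.le hm0.le).continuousOn_mul (continuousOn_id.sub continuousOn_const)
      have hker2 : IntervalIntegrable (fun s => (s - b') * deriv g s) volume m' b' :=
        (hg'int m' b' hm0.le hb0.le).continuousOn_mul (continuousOn_id.sub continuousOn_const)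
      have hkP1 : IntervalIntegrable (fun s => (s - a') * P s) volume a' m' :=
        (hPint a' m' ha0.le hm0.le).continuousOn_mul (continuousOn_id.sub continuousOn_const)
      have hkQ1 : IntervalIntegrable (fun s => (s - a') * Q s) volume a' m' :=
        (hQint a' m' ha0.le hm0.le).continuousOn_mul (continuousOn_id.sub continuousOn_const)
      have hkP2 : IntervalIntegrable (fun s => (s - b') * P s) volume m' b' :=
        (hPint m' b' hm0.le hb0.le).continuousOn_mul (continuousOn_id.sub continuousOn_const)
      have hkQ2 : IntervalIntegrable (fun s => (s - b') * Q s) volume m' b' :=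
        (hQint m' b' hm0.le hb0.le).continuousOn_mul (continuousOn_id.sub continuousOn_const)
      have hI1 : ∫ s in a'..m', ((s - a') * deriv g s) = (x/2) * g m' - ∫ s in a'..m', g s := by
        have h := hftc a' m' a' ha0 ham
        rw [intervalIntegral.integral_add (hgint a' m' ha0.le hm0.le) hker1] at h
        rw [hma, sub_self, zero_mul, sub_zero] at h
        linarith
      have hI2 : ∫ s in m'..b', ((s - b') * deriv g s) = (x/2) * g m' - ∫ s in m'..b', g s := by
        have h := hftc m' b' b' hm0 hmb
        rw [intervalIntegral.integral_add (hgint m' b' hm0.le hb0.le) hker2] at h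
        have h3 : (b' - b') * g b' - (m' - b') * g m' = (x/2) * g m' := by
          rw [sub_self, zero_mul]
          have : m' - b' = -(x/2) := by linarith
          rw [this]; ring
        rw [h3] at h
        linarith
      have hadj : (∫ s in a'..m', g s) + ∫ s in m'..b', g s = ∫ s in a'..b', g s :=
        intervalIntegral.integral_add_adjacent_intervals (hgint _ _ ha0.le hm0.le)
          (hgint _ _ hm0.le hb0.le)
      have hsplit1 : ∫ s in a'..m', ((s - a') * deriv g s) =
          (∫ s in a'..m', (s - a') * P s) - ∫ s in a'..m', (s - a') * Q s := by
        rw [← intervalIntegral.integral_sub hkP1 hkQ1]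
        apply intervalIntegral.integral_congr
        intro s _
        show (s - a') * deriv g s = (s - a') * P s - (s - a') * Q s
        rw [hPQ s]
        ring
      have hsplit2 : ∫ s in m'..b', ((s - b') * deriv g s) =
          (∫ s in m'..b', (s - b') * P s) - ∫ s in m'..b', (s - b') * Q s := by
        rw [← intervalIntegral.integral_sub hkP2 hkQ2]
        apply intervalIntegral.integral_congr
        intro s _
        show (s - b') * deriv g s = (s - b') * P s - (s - b') * Q s
        rw [hPQ s]
        ring
      obtain ⟨hA1P, hA2P⟩ := hhalfA P hPmono hPint a' m' ha0 ham
      obtain ⟨hA1Q, hA2Q⟩ := hhalfA Q hQmono hQint a' m' ha0 ham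
      obtain ⟨hB1P, hB2P⟩ := hhalfB P hPmono hPint m' b' hm0 hmb
      obtain ⟨hB1Q, hB2Q⟩ := hhalfB Q hQmono hQint m' b' hm0 hmb
      rw [hma] at hA1P hA2P hA1Q hA2Q
      rw [hbm] at hB1P hB2P hB1Q hB2Q
      have hq28 : ((x/2)^2/2) = x^2/8 := by ring
      rw [hq28] at hA1P hA2P hA1Q hA2Q hB1P hB2P hB1Q hB2Q
      constructor
      · linarith [hI1, hI2, hadj, hsplit1, hsplit2, hA1P, hB1P, hA2Q, hB2Q]
      · linarith [hI1, hI2, hadj, hsplit1, hsplit2, hA2P, hB2P, hA1Q, hB1Q]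
    -- summation over cells
    have hadjint : ∀ k : ℕ, k < N → IntervalIntegrable g volume (u k) (u (k+1)) :=
      fun k _ => hgint (u k) (u (k+1)) (hu0 k).le (hu0 (k+1)).le
    have hcellsum_up : x * (∑ n ∈ Finset.range N, g (((n:ℝ) + 1) * x)) -
        (∫ s in (u 0)..(u N), g s) ≤ (x^2/8) * (Q (u N) - Q (u 0)) := by
      have h2 := Finset.sum_le_sum (fun n (_ : n ∈ Finset.range N) => (cell n).2)
      rw [Finset.sum_sub_distrib, ← Finset.mul_sum,
        intervalIntegral.sum_integral_adjacent_intervals hadjint,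
        ← Finset.mul_sum, Finset.sum_range_sub (fun i => Q (u i))] at h2
      exact h2
    have hcellsum_lo : (x^2/8) * (P (u 0) - P (u N)) ≤
        x * (∑ n ∈ Finset.range N, g (((n:ℝ) + 1) * x)) - ∫ s in (u 0)..(u N), g s := by
      have h2 := Finset.sum_le_sum (fun n (_ : n ∈ Finset.range N) => (cell n).1)
      rw [Finset.sum_sub_distrib] at h2
      have h3 : ∑ n ∈ Finset.range N, (x^2/8) * (P (u n) - P (u (n+1))) =
          (x^2/8) * (P (u 0) - P (u N)) := by
        rw [← Finset.mul_sum]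
        congr 1
        have := Finset.sum_range_sub (fun i => P (u i)) N
        have h4 : ∑ n ∈ Finset.range N, (P (u n) - P (u (n+1))) =
            -∑ n ∈ Finset.range N, (P (u (n+1)) - P (u n)) := by
          rw [← Finset.sum_neg_distrib]
          apply Finset.sum_congr rfl
          intro i _
          ring
        rw [h4, this]
        ring
      rw [h3, ← Finset.mul_sum,
        intervalIntegral.sum_integral_adjacent_intervals hadjint] at h2
      exact h2
    -- variation difference bounds
    have huLN : u 0 ≤ u N := by
      simp only [hu_def]
      push_cast
      linarith [mul_nonneg (Nat.cast_nonneg N : (0:ℝ) ≤ (N:ℝ)) hx.le]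
    have hvLB := variationOnFromTo.add hLBVloc Set.self_mem_Ici
      (Set.mem_Ici.2 (hu0 0).le) (Set.mem_Ici.2 (hu0 N).le)
    have hgL : deriv g (u 0) = 0 := hd0 (u 0) (hu0 0) hL1
    have hgB : deriv g (u N) = 0 := hd1 (u N) hB1
    have hvle : variationOnFromTo (deriv g) (Set.Ici 0) (u 0) (u N) ≤ V :=
      hvarle _ _ (hu0 0).le huLN
    have hQdiff : Q (u N) - Q (u 0) ≤ V/2 := by
      simp only [hQdef]
      rw [hgL, hgB]
      linarith [hvLB, hvle]
    have hPdiff : -(V/2) ≤ P (u 0) - P (u N) := by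
      simp only [hPdef]
      rw [hgL, hgB]
      linarith [hvLB, hvle]
    -- value of the integral
    have hBpos : 0 < u N := hu0 N
    have hIog1 : IntegrableOn g (Set.Ioc 0 (u N)) volume := by
      rw [← intervalIntegrable_iff_integrableOn_Ioc_of_le hBpos.le]
      exact hgint 0 (u N) le_rfl hBpos.le
    have hIog2 : IntegrableOn g (Set.Ioi (u N)) volume := by
      apply MeasureTheory.IntegrableOn.congr_fun (integrableOn_zero) ?_ measurableSet_Ioi
      intro s hs
      simp only [Set.mem_Ioi] at hs
      exact (hzero s (by linarith)).symm
    have hsplitI : (∫ t in Set.Ioi (0:ℝ), g t) =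
        (∫ t in Set.Ioc 0 (u N), g t) + ∫ t in Set.Ioi (u N), g t := by
      rw [← MeasureTheory.setIntegral_union (Set.Ioc_disjoint_Ioi le_rfl) measurableSet_Ioi
        hIog1 hIog2, Set.Ioc_union_Ioi_eq_Ioi hBpos.le]
    have hIoiB : (∫ t in Set.Ioi (u N), g t) = 0 := by
      have heq : Set.EqOn g (fun _ => (0:ℝ)) (Set.Ioi (u N)) := by
        intro s hs
        simp only [Set.mem_Ioi] at hs
        exact hzero s (by linarith)
      rw [MeasureTheory.setIntegral_congr_fun measurableSet_Ioi heq]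
      simp
    have hadj0 : (∫ s in (0:ℝ)..(u 0), g s) + ∫ s in (u 0)..(u N), g s = ∫ s in (0:ℝ)..(u N), g s :=
      intervalIntegral.integral_add_adjacent_intervals (hgint _ _ le_rfl (hu0 0).le)
        (hgint _ _ (hu0 0).le hBpos.le)
    have h0L : (∫ s in (0:ℝ)..(u 0), g s) = x/2 := by
      have heq : Set.EqOn g (fun _ => (1:ℝ)) (Set.uIcc 0 (u 0)) := by
        intro s hs
        rw [Set.uIcc_of_le (hu0 0).le] at hs
        exact hone s hs.1 (by linarith [hs.2, hL1])
      rw [intervalIntegral.integral_congr heq, intervalIntegral.integral_const, smul_eq_mul,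
        mul_one]
      simp only [hu_def]
      push_cast
      ring
    have hval : (∫ s in (u 0)..(u N), g s) = 1 - x/2 := by
      have h1 : (∫ t in Set.Ioc 0 (u N), g t) = ∫ s in (0:ℝ)..(u N), g s :=
        (intervalIntegral.integral_of_le hBpos.le).symm
      rw [hint, hIoiB, h1, ← hadj0, h0L] at hsplitI
      linarith
    -- conclusion
    rw [htsumB]
    have hEup : x * (∑ n ∈ Finset.range N, g (((n:ℝ) + 1) * x)) - (1 - x/2) ≤ x^2 * V/16 := by
      have h8 : (x^2/8) * (Q (u N) - Q (u 0)) ≤ (x^2/8) * (V/2) :=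
        mul_le_mul_of_nonneg_left hQdiff (by positivity)
      rw [hval] at hcellsum_up
      linarith [hcellsum_up, h8]
    have hElo : -(x^2 * V/16) ≤ x * (∑ n ∈ Finset.range N, g (((n:ℝ) + 1) * x)) - (1 - x/2) := by
      have h8 : (x^2/8) * (-(V/2)) ≤ (x^2/8) * (P (u 0) - P (u N)) :=
        mul_le_mul_of_nonneg_left hPdiff (by positivity)
      rw [hval] at hcellsum_lo
      linarith [hcellsum_lo, h8]
    have hfl1' : x * ((⌊1/x⌋ : ℤ) : ℝ) ≤ 1 := by
      have h := mul_le_mul_of_nonneg_left (Int.floor_le (1/x)) hx.le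
      have h2 : x * (1/x) = 1 := by field_simp
      linarith
    have hfl2' : 1 - x < x * ((⌊1/x⌋ : ℤ) : ℝ) := by
      have h := mul_lt_mul_of_pos_left (Int.sub_one_lt_floor (1/x)) hx
      have h2 : x * (1/x - 1) = 1 - x := by field_simp
      linarith
    rw [abs_le]
    constructor
    · have hgoal : x * (-(1/2 + x/16 * V)) ≤
          x * (((⌊1/x⌋ : ℤ) : ℝ) - ∑ n ∈ Finset.range N, g (((n:ℝ) + 1) * x)) := by
        linarith [hEup, hfl2']
      exact le_of_mul_le_mul_left hgoal hx
    · have hgoal : x * (((⌊1/x⌋ : ℤ) : ℝ) - ∑ n ∈ Finset.range N, g (((n:ℝ) + 1) * x)) ≤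
          x * (1/2 + x/16 * V) := by
        linarith [hElo, hfl1']
      exact le_of_mul_le_mul_left hgoal hx
end
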